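/- arXiv:1909.06898 — 5 statements merged into one kernel-verified Lean document; each statement's English description precedes it below -/
import Mathlib

section
/- For every operator L ∈ A and all integers k, ℓ, one has φ_{λ,μ}(L S_x^k S_y^ℓ) = φ_{λ,μ}(L) · φ_{λ,μ}(S_x^k S_y^ℓ). -/
open Polynomial BigOperators

noncomputable section

/-- The shift automorphism `X ↦ X + 1` of a polynomial ring. -/
def shiftPoly (A : Type*) [CommRing A] : Polynomial A ≃ₐ[A] Polynomial A :=
  AlgEquiv.ofAlgHom (aeval (X + 1)) (aeval (X - 1))
    (by apply algHom_ext; simp) (by apply algHom_ext; simp)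

variable (K : Type*) [Field K] [CharZero K]

/-- `K[x,y]` modelled as `K[x][y]`: the inner variable is `x`, the outer one is `y`. -/
abbrev Rxy := Polynomial (Polynomial K)

/-- The rational function field `K(x,y)`, as the fraction field of `K[x][y]`. -/
abbrev Fxy := FractionRing (Rxy K)

/-- The shift `x ↦ x + 1` on `K[x]`. -/
def σxK : RingAut (Polynomial K) := (shiftPoly K).toRingEquiv

/-- The shift `x ↦ x + 1` on `K[x,y]`. -/
def σxR : RingAut (Rxy K) := mapEquiv (shiftPoly K).toRingEquiv

/-- The shift `y ↦ y + 1` on `K[x,y]`. -/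
def σyR : RingAut (Rxy K) := (shiftPoly (Polynomial K)).toRingEquiv

/-- The shift `σ_x` on `K(x,y)`. -/
def σxF : RingAut (Fxy K) := IsFractionRing.ringEquivOfRingEquiv (σxR K)

/-- The shift `σ_y` on `K(x,y)`. -/
def σyF : RingAut (Fxy K) := IsFractionRing.ringEquivOfRingEquiv (σyR K)

/-- The canonical map `K[x,y] → K(x,y)`. -/
def ι₀ : Rxy K →+* Fxy K := algebraMap (Rxy K) (Fxy K)

/-- The canonical map `K[x] → K(x,y)`. -/
def ιx₀ : Polynomial K →+* Fxy K := (ι₀ K).comp (Polynomial.C : Polynomial K →+* Rxy K)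

/-- The canonical map `K → K(x,y)`. -/
def ιK : K →+* Fxy K := (ιx₀ K).comp (Polynomial.C : K →+* Polynomial K)

/-- The element `x` of `K(x,y)`. -/
def xF : Fxy K := ιx₀ K X

/-- The element `y` of `K(x,y)`. -/
def yF : Fxy K := ι₀ K X

/-- A rational function `f ∈ K(x,y)` is `σ_y`-summable if `f = σ_y(g) - g`
for some `g ∈ K(x,y)`. -/
def IsSummableY (f : Fxy K) : Prop := ∃ g : Fxy K, f = σyF K g - g

/-- The Laurent operator ring `A = K(x,y)[S_x,S_y,S_x⁻¹,S_y⁻¹]`, an operator being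
recorded by its (finitely supported) family of coefficients `a_{ij}` in
`L = Σ a_{ij} S_x^i S_y^j`. -/
abbrev OpA := (ℤ × ℤ) →₀ Fxy K

/-- The subring `A_{λ,μ} = K(x,y)[S_{λ,μ}, S_{λ,μ}⁻¹]`, an operator being recorded by its
(finitely supported) family of coefficients `a_i` in `M = Σ a_i S_{λ,μ}^i`. -/
abbrev OpB := ℤ →₀ Fxy K

/-- The automorphism `σ_x^i σ_y^j` of `K(x,y)` attached to the monomial `S_x^i S_y^j`. -/
def σv (v : ℤ × ℤ) : RingAut (Fxy K) := σxF K ^ v.1 * σyF K ^ v.2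

/-- Multiplication in `A`, determined by the commutation rule `S_x^i S_y^j f
= σ_x^i σ_y^j (f) S_x^i S_y^j`. -/
def mulA (L M : OpA K) : OpA K :=
  L.sum fun p a => M.sum fun q b => Finsupp.single (p + q) (a * σv K p b)

/-- The application of an operator `L = Σ a_{ij} S_x^i S_y^j ∈ A` to a rational function. -/
def applyA (L : OpA K) (f : Fxy K) : Fxy K := L.sum fun p a => a * σv K p f

/-- The operator `S_y - 1 ∈ A`. -/
def SyOne : OpA K :=
  Finsupp.single ((0 : ℤ), (1 : ℤ)) (1 : Fxy K) - Finsupp.single ((0 : ℤ), (0 : ℤ)) (1 : Fxy K)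

section TypeLamMu

/- `α`, `β` are the Bézout cofactors for the integer-linear type `(λ, μ)`,
so that `S_{λ,μ} = S_x^α S_y^β`. -/
variable (α β : ℤ)

/-- The automorphism `σ_{λ,μ} = σ_x^α σ_y^β` of `K(x,y)` attached to `S_{λ,μ} = S_x^α S_y^β`. -/
def τF : RingAut (Fxy K) := σxF K ^ α * σyF K ^ β

/-- Multiplication in `A_{λ,μ}`. -/
def mulB (L M : OpB K) : OpB K :=
  L.sum fun i a => M.sum fun j b => Finsupp.single (i + j) (a * (τF K α β ^ i) b)

/-- The application of an operator `M = Σ a_i S_{λ,μ}^i ∈ A_{λ,μ}` to a rational function. -/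
def applyB (M : OpB K) (f : Fxy K) : Fxy K := M.sum fun i a => a * (τF K α β ^ i) f

/-- The inclusion `A_{λ,μ} ⊆ A`, sending `S_{λ,μ}^k` to `S_x^{kα} S_y^{kβ}`. -/
def ιB (M : OpB K) : OpA K := Finsupp.mapDomain (fun k : ℤ => (k * α, k * β)) M

/-- The left `K(x,y)`-linear map `φ_{λ,μ} : A → A_{λ,μ}`,
sending `Σ a_{ij} S_x^i S_y^j` to `Σ a_{ij} S_{λ,μ}^{iλ+jμ}`. -/
def φB (lam μ : ℤ) (L : OpA K) : OpB K :=
  Finsupp.mapDomain (fun p : ℤ × ℤ => p.1 * lam + p.2 * μ) L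

/-- The left scalar multiplication `L ⊙ M = φ_{λ,μ}(L M)` of `L ∈ A` on `M ∈ A_{λ,μ}`. -/
def odot (lam μ : ℤ) (L : OpA K) (M : OpB K) : OpB K :=
  φB K lam μ (mulA K L (ιB K α β M))

end TypeLamMu

/-- The lowest order `lord(M)` of a (nonzero) operator `M ∈ A_{λ,μ}`. -/
def lord (M : OpB K) : ℤ := WithTop.untopD 0 (M.support.min)

/-- The highest order `hord(M)` of a (nonzero) operator `M ∈ A_{λ,μ}`. -/
def hord (M : OpB K) : ℤ := WithBot.unbotD 0 (M.support.max)

/-- The inclusion `K(x,y)[S_y, S_y⁻¹] ⊆ A`. -/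
def ιy (L : ℤ →₀ Fxy K) : OpA K := Finsupp.mapDomain (fun j : ℤ => ((0 : ℤ), j)) L

/-- The inclusion `K[x][S_x] ⊆ A`, for operators with polynomial coefficients
supported on nonnegative powers of `S_x`. -/
def ιxOp (L : ℕ →₀ Polynomial K) : OpA K :=
  L.sum fun ℓ c => Finsupp.single ((ℓ : ℤ), (0 : ℤ)) (ιx₀ K c)

/-- A nonzero operator `L = Σ c_ℓ S_x^ℓ ∈ K[x][S_x]` is a telescoper for `f ∈ K(x,y)`
if `L(f)` is `σ_y`-summable. -/
def IsTelescoper (L : ℕ →₀ Polynomial K) (f : Fxy K) : Prop :=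
  L ≠ 0 ∧ IsSummableY K (applyA K (ιxOp K L) f)

/-- The degree in `x` of a polynomial in `K[x,y] = K[x][y]`. -/
def degX (r : Rxy K) : ℕ := r.support.sup fun n => (r.coeff n).natDegree

/-- The total degree in `x, y` of a polynomial in `K[x,y] = K[x][y]`. -/
def degXY (r : Rxy K) : ℕ := r.support.sup fun n => n + (r.coeff n).natDegree

end

/-- Lemma `LEM:prod`.
For every operator `L ∈ A` and all integers `k, ℓ`, one has
`φ_{λ,μ}(L S_x^k S_y^ℓ) = φ_{λ,μ}(L) ⬝ φ_{λ,μ}(S_x^k S_y^ℓ)`,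
the product on the right being taken in `A_{λ,μ}`. -/
theorem statement1 (K : Type*) [Field K] [CharZero K]
    (lam μ α β : ℤ) (hμ : 0 < μ) (hcop : IsCoprime lam μ)
    (hbez : α * lam + β * μ = 1) (hα : 0 ≤ α ∧ α < μ)
    (hβ : lam ≠ 0 → |β| ≤ |lam|) (hβ0 : lam = 0 → α = 0 ∧ β = 1)
    (L : OpA K) (k ℓ : ℤ) :
    φB K lam μ (mulA K L (Finsupp.single (k, ℓ) (1 : Fxy K))) =
      mulB K α β (φB K lam μ L)
        (φB K lam μ (Finsupp.single (k, ℓ) (1 : Fxy K))) := by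
  induction L using Finsupp.induction_linear with
  | zero =>
      simp [mulA, mulB, φB]
  | add L M hL hM =>
      have hA : mulA K (L + M) (Finsupp.single (k, ℓ) (1 : Fxy K)) =
          mulA K L (Finsupp.single (k, ℓ) (1 : Fxy K)) +
          mulA K M (Finsupp.single (k, ℓ) (1 : Fxy K)) := by
        unfold mulA
        rw [Finsupp.sum_add_index]
        · intro p _; simp
        · intro p _ a b
          rw [Finsupp.sum_single_index, Finsupp.sum_single_index,
            Finsupp.sum_single_index] <;> simp [add_mul, Finsupp.single_add]
      have hB : ∀ N : OpB K, mulB K α β (φB K lam μ L + φB K lam μ M) N =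
          mulB K α β (φB K lam μ L) N + mulB K α β (φB K lam μ M) N := by
        intro N
        unfold mulB
        rw [Finsupp.sum_add_index]
        · intro p _; simp
        · intro p _ a b
          simp [add_mul, Finsupp.single_add, Finsupp.sum_add]
      rw [hA]
      unfold φB
      rw [Finsupp.mapDomain_add, Finsupp.mapDomain_add]
      show _ = mulB K α β (φB K lam μ L + φB K lam μ M) _
      rw [hB]
      exact congrArg₂ (· + ·) hL hM
  | single p a =>
      obtain ⟨i, j⟩ := p
      unfold mulA mulB φB
      rw [Finsupp.sum_single_index (by simp),
        Finsupp.sum_single_index (by simp),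
        Finsupp.mapDomain_single, Finsupp.mapDomain_single,
        Finsupp.mapDomain_single,
        Finsupp.sum_single_index (by simp),
        Finsupp.sum_single_index (by simp)]
      simp only [map_one, mul_one]
      congr 1
      simp only [Prod.fst_add, Prod.snd_add]
      ring
end

section
/- The kernel of φ_{λ,μ} is exactly the left ideal of A generated by the two operators S_x − S_{λ,μ}^{λ} and S_y − S_{λ,μ}^{μ}. -/
open Polynomial BigOperators

section Statement2Aux

variable {K : Type*} [Field K] [CharZero K]

private lemma mulA_zero_left (M : OpA K) : mulA K 0 M = 0 :=
  Finsupp.sum_zero_index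

private lemma mulA_add_left (P P' M : OpA K) :
    mulA K (P + P') M = mulA K P M + mulA K P' M := by
  unfold mulA
  refine Finsupp.sum_add_index' (fun p => ?_) (fun p a a' => ?_)
  · simp
  · simp only [add_mul, Finsupp.single_add]
    exact Finsupp.sum_add

private lemma mulA_neg_left (P M : OpA K) : mulA K (-P) M = -mulA K P M := by
  have h := mulA_add_left P (-P) M
  rw [add_neg_cancel, mulA_zero_left] at h
  exact eq_neg_of_add_eq_zero_right h.symm

private lemma mulA_sub_left (P P' M : OpA K) :
    mulA K (P - P') M = mulA K P M - mulA K P' M := by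
  rw [sub_eq_add_neg, mulA_add_left, mulA_neg_left, ← sub_eq_add_neg]

private lemma mulA_single (p : ℤ × ℤ) (a : Fxy K) (M : OpA K) :
    mulA K (Finsupp.single p a) M
      = M.sum fun q b => Finsupp.single (p + q) (a * σv K p b) :=
  Finsupp.sum_single_index (by simp)

private lemma mulA_single_sub (p s s' : ℤ × ℤ) (a : Fxy K) :
    mulA K (Finsupp.single p a)
        (Finsupp.single s (1 : Fxy K) - Finsupp.single s' (1 : Fxy K))
      = Finsupp.single (p + s) a - Finsupp.single (p + s') a := by
  rw [mulA_single,
    Finsupp.sum_sub_index (fun q b₁ b₂ => by rw [map_sub, mul_sub, Finsupp.single_sub]),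
    Finsupp.sum_single_index (by simp), Finsupp.sum_single_index (by simp)]
  simp

private lemma mulA_sub_singles (P : OpA K) (s s' : ℤ × ℤ) :
    mulA K P (Finsupp.single s (1 : Fxy K) - Finsupp.single s' (1 : Fxy K))
      = P.sum fun p a => Finsupp.single (p + s) a - Finsupp.single (p + s') a := by
  unfold mulA
  refine Finsupp.sum_congr fun p _ => ?_
  rw [Finsupp.sum_sub_index (fun q b₁ b₂ => by rw [map_sub, mul_sub, Finsupp.single_sub]),
    Finsupp.sum_single_index (by simp), Finsupp.sum_single_index (by simp)]
  simp

private lemma phiB_add (lam μ : ℤ) (X Y : OpA K) :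
    φB K lam μ (X + Y) = φB K lam μ X + φB K lam μ Y :=
  Finsupp.mapDomain_add

private lemma phiB_mulA_sub (lam μ : ℤ) (P : OpA K) (s s' : ℤ × ℤ)
    (h : s.1 * lam + s.2 * μ = s'.1 * lam + s'.2 * μ) :
    φB K lam μ (mulA K P (Finsupp.single s (1 : Fxy K) - Finsupp.single s' (1 : Fxy K))) = 0 := by
  rw [mulA_sub_singles]
  have hF : ∀ X : OpA K, φB K lam μ X
      = Finsupp.mapDomain.addMonoidHom (fun p : ℤ × ℤ => p.1 * lam + p.2 * μ) X := fun X => rfl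
  rw [hF, map_finsuppSum, Finsupp.sum]
  refine Finset.sum_eq_zero fun p hp => ?_
  rw [map_sub]
  simp only [Finsupp.mapDomain.addMonoidHom_apply, Finsupp.mapDomain_single]
  have hidx : (p + s).1 * lam + (p + s).2 * μ = (p + s').1 * lam + (p + s').2 * μ := by
    simp only [Prod.fst_add, Prod.snd_add]
    linear_combination h
  rw [hidx, sub_self]

private lemma step_sub (s s' c : ℤ × ℤ) (a : Fxy K) :
    ∃ P : OpA K, Finsupp.single (c + (s - s')) a - Finsupp.single c a
      = mulA K P (Finsupp.single s (1 : Fxy K) - Finsupp.single s' (1 : Fxy K)) := by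
  refine ⟨Finsupp.single (c - s') a, ?_⟩
  rw [mulA_single_sub]
  have h1 : c - s' + s = c + (s - s') := by abel
  have h2 : c - s' + s' = c := by abel
  rw [h1, h2]

private lemma tele (a : Fxy K) (v : ℤ × ℤ) (G : OpA K)
    (h : ∀ c : ℤ × ℤ, ∃ P : OpA K,
      Finsupp.single (c + v) a - Finsupp.single c a = mulA K P G)
    (m : ℤ) (c : ℤ × ℤ) :
    ∃ P : OpA K, Finsupp.single (c + m • v) a - Finsupp.single c a = mulA K P G := by
  induction m using Int.induction_on generalizing c with
  | zero => exact ⟨0, by simp [mulA_zero_left]⟩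
  | succ n ih =>
    obtain ⟨P₁, h₁⟩ := ih c
    obtain ⟨P₂, h₂⟩ := h (c + (n : ℤ) • v)
    refine ⟨P₂ + P₁, ?_⟩
    rw [mulA_add_left, ← h₁, ← h₂]
    have hv : c + ((n : ℤ) + 1) • v = c + (n : ℤ) • v + v := by
      rw [add_smul, one_smul]; abel
    rw [hv]; abel
  | pred n ih =>
    obtain ⟨P₁, h₁⟩ := ih c
    obtain ⟨P₂, h₂⟩ := h (c + (-(n : ℤ) - 1) • v)
    refine ⟨P₁ - P₂, ?_⟩
    rw [mulA_sub_left, ← h₁, ← h₂]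
    have hv : c + (-(n : ℤ) - 1) • v + v = c + (-(n : ℤ)) • v := by
      rw [sub_smul, one_smul]; abel
    rw [hv]; abel

private lemma key_single (lam μ α β : ℤ) (hbez : α * lam + β * μ = 1)
    (p : ℤ × ℤ) (a : Fxy K) :
    ∃ P Q : OpA K,
      Finsupp.single p a
          - Finsupp.single ((p.1 * lam + p.2 * μ) * α, (p.1 * lam + p.2 * μ) * β) a
        = mulA K P (Finsupp.single ((1 : ℤ), (0 : ℤ)) (1 : Fxy K)
            - Finsupp.single (lam * α, lam * β) (1 : Fxy K))
          + mulA K Q (Finsupp.single ((0 : ℤ), (1 : ℤ)) (1 : Fxy K)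
            - Finsupp.single (μ * α, μ * β) (1 : Fxy K)) := by
  set n : ℤ := p.1 * lam + p.2 * μ with hn
  set k : ℤ := β * (p.1 - n * α) - α * (p.2 - n * β) with hk
  set r : ℤ × ℤ := (n * α, n * β) with hr
  set v₁ : ℤ × ℤ := ((1 : ℤ), (0 : ℤ)) - (lam * α, lam * β) with hv₁
  set v₂ : ℤ × ℤ := ((0 : ℤ), (1 : ℤ)) - (μ * α, μ * β) with hv₂
  obtain ⟨P, hP⟩ := tele a v₁ _ (fun c => step_sub _ _ c a) (k * μ) r
  obtain ⟨Q, hQ⟩ := tele a v₂ _ (fun c => step_sub _ _ c a) (-(k * lam)) (r + (k * μ) • v₁)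
  have hp : r + (k * μ) • v₁ + (-(k * lam)) • v₂ = p := by
    have e1 : (r + (k * μ) • v₁ + (-(k * lam)) • v₂).1 = p.1 := by
      simp only [hr, hv₁, hv₂, Prod.fst_add, Prod.smul_fst, Prod.fst_sub, smul_eq_mul]
      simp only [hk, hn]
      linear_combination p.1 * hbez
    have e2 : (r + (k * μ) • v₁ + (-(k * lam)) • v₂).2 = p.2 := by
      simp only [hr, hv₁, hv₂, Prod.snd_add, Prod.smul_snd, Prod.snd_sub, smul_eq_mul]
      simp only [hk, hn]
      linear_combination p.2 * hbez
    exact Prod.ext e1 e2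
  refine ⟨P, Q, ?_⟩
  rw [← hp, ← hP, ← hQ]
  abel

end Statement2Aux

/-- Proposition `PROP:kernel`.
The kernel of `φ_{λ,μ}` is exactly the left ideal of `A` generated by the two operators
`S_x − S_{λ,μ}^λ` and `S_y − S_{λ,μ}^μ`; that is, `φ_{λ,μ}(L) = 0` if and only if
`L = P (S_x − S_{λ,μ}^λ) + Q (S_y − S_{λ,μ}^μ)` for some `P, Q ∈ A`. -/
theorem statement2 (K : Type*) [Field K] [CharZero K]
    (lam μ α β : ℤ) (hμ : 0 < μ) (hcop : IsCoprime lam μ)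
    (hbez : α * lam + β * μ = 1) (hα : 0 ≤ α ∧ α < μ)
    (hβ : lam ≠ 0 → |β| ≤ |lam|) (hβ0 : lam = 0 → α = 0 ∧ β = 1)
    (L : OpA K) :
    φB K lam μ L = 0 ↔
      ∃ P Q : OpA K,
        L = mulA K P (Finsupp.single ((1 : ℤ), (0 : ℤ)) (1 : Fxy K) -
              ιB K α β (Finsupp.single lam (1 : Fxy K))) +
            mulA K Q (Finsupp.single ((0 : ℤ), (1 : ℤ)) (1 : Fxy K) -
              ιB K α β (Finsupp.single μ (1 : Fxy K))) := by
  have hι : ∀ t : ℤ, ιB K α β (Finsupp.single t (1 : Fxy K))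
      = Finsupp.single (t * α, t * β) (1 : Fxy K) := by
    intro t; unfold ιB; rw [Finsupp.mapDomain_single]
  rw [hι lam, hι μ]
  constructor
  · intro h0
    have hmap : ιB K α β (φB K lam μ L)
        = Finsupp.mapDomain
            (fun p : ℤ × ℤ => ((p.1 * lam + p.2 * μ) * α, (p.1 * lam + p.2 * μ) * β)) L := by
      unfold ιB φB
      rw [← Finsupp.mapDomain_comp]
      rfl
    have hzero : Finsupp.mapDomain
        (fun p : ℤ × ℤ => ((p.1 * lam + p.2 * μ) * α, (p.1 * lam + p.2 * μ) * β)) L = 0 := by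
      rw [← hmap, h0]
      unfold ιB
      exact Finsupp.mapDomain_zero
    have hL : L = L.sum (fun p a => Finsupp.single p a
        - Finsupp.single ((p.1 * lam + p.2 * μ) * α, (p.1 * lam + p.2 * μ) * β) a) := by
      rw [Finsupp.sum_sub, Finsupp.sum_single]
      have hdef : (L.sum fun p a =>
          Finsupp.single ((p.1 * lam + p.2 * μ) * α, (p.1 * lam + p.2 * μ) * β) a)
        = Finsupp.mapDomain
            (fun p : ℤ × ℤ => ((p.1 * lam + p.2 * μ) * α, (p.1 * lam + p.2 * μ) * β)) L := rfl
      rw [hdef, hzero, sub_zero]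
    rw [hL, Finsupp.sum]
    refine Finset.sum_induction _
      (fun X : OpA K => ∃ P Q : OpA K,
        X = mulA K P (Finsupp.single ((1 : ℤ), (0 : ℤ)) (1 : Fxy K)
              - Finsupp.single (lam * α, lam * β) (1 : Fxy K))
          + mulA K Q (Finsupp.single ((0 : ℤ), (1 : ℤ)) (1 : Fxy K)
              - Finsupp.single (μ * α, μ * β) (1 : Fxy K)))
      ?_ ?_ ?_
    · rintro X Y ⟨P, Q, hXY⟩ ⟨P', Q', hXY'⟩
      exact ⟨P + P', Q + Q', by rw [hXY, hXY', mulA_add_left, mulA_add_left]; abel⟩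
    · exact ⟨0, 0, by simp [mulA_zero_left]⟩
    · intro p _
      exact key_single lam μ α β hbez p (L p)
  · rintro ⟨P, Q, hPQ⟩
    rw [hPQ, phiB_add, phiB_mulA_sub, phiB_mulA_sub, add_zero]
    · linear_combination (-μ) * hbez
    · linear_combination (-lam) * hbez
end

section
/- Let L ∈ K(x,y)[S_y, S_y^{-1}] and M ∈ A_{λ,μ} be nonzero operators. Then φ_{λ,μ}(L) is nonzero, L ⊙ M is nonzero, and lord(L ⊙ M) = lord(φ_{λ,μ}(L)) + lord(M) and hord(L ⊙ M) = hord(φ_{λ,μ}(L)) + hord(M). -/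
open Polynomial BigOperators

section AuxStatement3

set_option linter.unusedSectionVars false

variable {K : Type*} [Field K] [CharZero K]

lemma lord_eq_min' (N : OpB K) (h : N.support.Nonempty) : lord K N = N.support.min' h := by
  rw [lord, ← Finset.coe_min' h, WithTop.untopD_coe]

lemma hord_eq_max' (N : OpB K) (h : N.support.Nonempty) : hord K N = N.support.max' h := by
  rw [hord, ← Finset.coe_max' h, WithBot.unbotD_coe]

lemma odot_iy_eq (lam mu a b : ℤ) (hbez : a * lam + b * mu = 1)
    (L : ℤ →₀ Fxy K) (M : OpB K) :
    odot K a b lam mu (ιy K L) M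
      = L.sum fun j c => M.sum fun k d =>
          Finsupp.single (j * mu + k) (c * σv K (0, j) d) := by
  rw [odot, mulA, ιy, ιB]
  rw [Finsupp.sum_mapDomain_index]
  rotate_left
  · intro p
    simp
  · intro p m₁ m₂
    simp [add_mul, Finsupp.single_add, Finsupp.sum, Finset.sum_add_distrib]
  have h2 : ∀ (p : ℤ × ℤ) (c : Fxy K),
      ((Finsupp.mapDomain (fun k : ℤ => (k * a, k * b)) M).sum fun q d =>
        Finsupp.single (p + q) (c * σv K p d))
      = M.sum fun k d => Finsupp.single (p + (k * a, k * b)) (c * σv K p d) := by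
    intro p c
    rw [Finsupp.sum_mapDomain_index]
    · intro q; simp
    · intro q m₁ m₂; simp [mul_add, Finsupp.single_add]
  simp only [h2]
  simp only [Finsupp.sum]
  rw [φB]
  simp only [Finsupp.mapDomain_finset_sum, Finsupp.mapDomain_single]
  refine Finset.sum_congr rfl fun j hj => Finset.sum_congr rfl fun k hk => ?_
  congr 1
  simp only [Prod.fst_add, Prod.snd_add]
  -- (no cast needed)
  linear_combination k * hbez

lemma φB_iy_eq (lam mu : ℤ) (L : ℤ →₀ Fxy K) :
    φB K lam mu (ιy K L) = Finsupp.mapDomain (fun j : ℤ => j * mu) L := by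
  rw [φB, ιy, ← Finsupp.mapDomain_comp]
  congr 1
  funext j
  simp [Function.comp]

end AuxStatement3

/-- Lemma `LEM:order`.
Let `L ∈ K(x,y)[S_y, S_y⁻¹]` and `M ∈ A_{λ,μ}` be nonzero operators.  Then `φ_{λ,μ}(L)`
is nonzero, `L ⊙ M` is nonzero, and
`lord(L ⊙ M) = lord(φ_{λ,μ}(L)) + lord(M)` and `hord(L ⊙ M) = hord(φ_{λ,μ}(L)) + hord(M)`. -/
theorem statement3 (K : Type*) [Field K] [CharZero K]
    (lam μ α β : ℤ) (hμ : 0 < μ) (hcop : IsCoprime lam μ)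
    (hbez : α * lam + β * μ = 1) (hα : 0 ≤ α ∧ α < μ)
    (hβ : lam ≠ 0 → |β| ≤ |lam|) (hβ0 : lam = 0 → α = 0 ∧ β = 1)
    (L : ℤ →₀ Fxy K) (M : OpB K) (hL : L ≠ 0) (hM : M ≠ 0) :
    φB K lam μ (ιy K L) ≠ 0 ∧
      odot K α β lam μ (ιy K L) M ≠ 0 ∧
      lord K (odot K α β lam μ (ιy K L) M) =
        lord K (φB K lam μ (ιy K L)) + lord K M ∧
      hord K (odot K α β lam μ (ιy K L) M) =
        hord K (φB K lam μ (ιy K L)) + hord K M := by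
  classical
  have hmu : (μ : ℤ) ≠ 0 := hμ.ne'
  have hinj : Function.Injective fun j : ℤ => j * μ := fun s t h => mul_right_cancel₀ hmu h
  have hLs : L.support.Nonempty := Finsupp.support_nonempty_iff.mpr hL
  have hMs : M.support.Nonempty := Finsupp.support_nonempty_iff.mpr hM
  have hφ := φB_iy_eq (K := K) lam μ L
  have hφsupp : (φB K lam μ (ιy K L)).support = L.support.image (fun j => j * μ) := by
    rw [hφ]; exact Finsupp.mapDomain_support_of_injective hinj L
  have hφs : (φB K lam μ (ιy K L)).support.Nonempty := by
    rw [hφsupp]; exact hLs.image _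
  have hφne : φB K lam μ (ιy K L) ≠ 0 := Finsupp.support_nonempty_iff.mp hφs
  set j₀ := L.support.min' hLs with hj₀
  set j₁ := L.support.max' hLs with hj₁
  set k₀ := M.support.min' hMs with hk₀
  set k₁ := M.support.max' hMs with hk₁
  have hN := odot_iy_eq (K := K) lam μ α β hbez L M
  set N := odot K α β lam μ (ιy K L) M with hNdef
  -- support bound
  have hsupp : ∀ t ∈ N.support, ∃ j ∈ L.support, ∃ k ∈ M.support, t = j * μ + k := by
    intro t ht
    rw [hN] at ht
    have h1 := Finsupp.support_sum ht
    obtain ⟨j, hj, h2⟩ := Finset.mem_biUnion.mp h1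
    have h3 := Finsupp.support_sum h2
    obtain ⟨k, hk, h4⟩ := Finset.mem_biUnion.mp h3
    have h5 := Finsupp.support_single_subset h4
    exact ⟨j, hj, k, hk, Finset.mem_singleton.mp h5⟩
  -- extreme coefficients
  have hne0 : ∀ (j k : ℤ), j ∈ L.support → k ∈ M.support →
      L j * σv K (0, j) (M k) ≠ 0 := by
    intro j k hj hk
    refine mul_ne_zero (Finsupp.mem_support_iff.mp hj) fun h => ?_
    exact Finsupp.mem_support_iff.mp hk ((σv K (0, j)).injective (by rw [h, map_zero]))
  have hcoefflow : N (j₀ * μ + k₀) = L j₀ * σv K (0, j₀) (M k₀) := by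
    rw [hN]
    simp only [Finsupp.sum, Finsupp.finset_sum_apply, Finsupp.single_apply]
    rw [Finset.sum_eq_single_of_mem j₀ (L.support.min'_mem hLs)]
    · rw [Finset.sum_eq_single_of_mem k₀ (M.support.min'_mem hMs)]
      · rw [if_pos rfl]
      · intro k hk hkne
        exact if_neg fun h => hkne (by linarith)
    · intro j hj hjne
      refine Finset.sum_eq_zero fun k hk => ?_
      have h1 : j₀ ≤ j := Finset.min'_le _ _ hj
      have h2 : k₀ ≤ k := Finset.min'_le _ _ hk
      have h3 : μ ≤ (j - j₀) * μ := by
        simpa using mul_le_mul_of_nonneg_right (show (1:ℤ) ≤ j - j₀ by omega) hμ.le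
      have h4 := sub_mul j j₀ μ
      exact if_neg fun h => by linarith
  have hcoeffhigh : N (j₁ * μ + k₁) = L j₁ * σv K (0, j₁) (M k₁) := by
    rw [hN]
    simp only [Finsupp.sum, Finsupp.finset_sum_apply, Finsupp.single_apply]
    rw [Finset.sum_eq_single_of_mem j₁ (L.support.max'_mem hLs)]
    · rw [Finset.sum_eq_single_of_mem k₁ (M.support.max'_mem hMs)]
      · rw [if_pos rfl]
      · intro k hk hkne
        exact if_neg fun h => hkne (by linarith)
    · intro j hj hjne
      refine Finset.sum_eq_zero fun k hk => ?_
      have h1 : j ≤ j₁ := Finset.le_max' _ _ hj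
      have h2 : k ≤ k₁ := Finset.le_max' _ _ hk
      have h3 : μ ≤ (j₁ - j) * μ := by
        simpa using mul_le_mul_of_nonneg_right (show (1:ℤ) ≤ j₁ - j by omega) hμ.le
      have h4 := sub_mul j₁ j μ
      exact if_neg fun h => by linarith
  have hlowmem : j₀ * μ + k₀ ∈ N.support := by
    rw [Finsupp.mem_support_iff, hcoefflow]
    exact hne0 _ _ (L.support.min'_mem hLs) (M.support.min'_mem hMs)
  have hhighmem : j₁ * μ + k₁ ∈ N.support := by
    rw [Finsupp.mem_support_iff, hcoeffhigh]
    exact hne0 _ _ (L.support.max'_mem hLs) (M.support.max'_mem hMs)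
  have hNs : N.support.Nonempty := ⟨_, hlowmem⟩
  have hNne : N ≠ 0 := Finsupp.support_nonempty_iff.mp hNs
  have hlordN : lord K N = j₀ * μ + k₀ := by
    rw [lord_eq_min' _ hNs]
    refine le_antisymm (Finset.min'_le _ _ hlowmem) (Finset.le_min' _ _ _ fun t ht => ?_)
    obtain ⟨j, hj, k, hk, rfl⟩ := hsupp t ht
    have h1 : j₀ ≤ j := Finset.min'_le _ _ hj
    have h2 : k₀ ≤ k := Finset.min'_le _ _ hk
    have h3 : 0 ≤ (j - j₀) * μ := mul_nonneg (by omega) hμ.le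
    have h4 : (j - j₀) * μ = j * μ - j₀ * μ := sub_mul j j₀ μ
    linarith
  have hhordN : hord K N = j₁ * μ + k₁ := by
    rw [hord_eq_max' _ hNs]
    refine le_antisymm (Finset.max'_le _ _ _ fun t ht => ?_) (Finset.le_max' _ _ hhighmem)
    obtain ⟨j, hj, k, hk, rfl⟩ := hsupp t ht
    have h1 : j ≤ j₁ := Finset.le_max' _ _ hj
    have h2 : k ≤ k₁ := Finset.le_max' _ _ hk
    have h3 : 0 ≤ (j₁ - j) * μ := mul_nonneg (by omega) hμ.le
    have h4 : (j₁ - j) * μ = j₁ * μ - j * μ := sub_mul j₁ j μ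
    linarith
  have hφlord : lord K (φB K lam μ (ιy K L)) = j₀ * μ := by
    rw [lord_eq_min' _ hφs]
    refine le_antisymm (Finset.min'_le _ _ ?_) (Finset.le_min' _ _ _ fun t ht => ?_)
    · rw [hφsupp]; exact Finset.mem_image_of_mem _ (L.support.min'_mem hLs)
    · rw [hφsupp] at ht
      obtain ⟨j, hj, rfl⟩ := Finset.mem_image.mp ht
      exact mul_le_mul_of_nonneg_right (Finset.min'_le _ _ hj) hμ.le
  have hφhord : hord K (φB K lam μ (ιy K L)) = j₁ * μ := by
    rw [hord_eq_max' _ hφs]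
    refine le_antisymm (Finset.max'_le _ _ _ fun t ht => ?_) (Finset.le_max' _ _ ?_)
    · rw [hφsupp] at ht
      obtain ⟨j, hj, rfl⟩ := Finset.mem_image.mp ht
      exact mul_le_mul_of_nonneg_right (Finset.le_max' _ _ hj) hμ.le
    · rw [hφsupp]; exact Finset.mem_image_of_mem _ (L.support.max'_mem hLs)
  refine ⟨hφne, hNne, ?_, ?_⟩
  · rw [hlordN, hφlord, lord_eq_min' _ hMs]
  · rw [hhordN, hφhord, hord_eq_max' _ hMs]
end

section
/- Let L ∈ K(x,y)[S_y] be nonzero and M ∈ A_{λ,μ}. Then there exist Q, R ∈ A_{λ,μ} such that M = L ⊙ Q + R, and R either is zero or satisfies 0 ≤ lord(R) ≤ hord(R) < hord(φ_{λ,μ}(L)). -/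
open Polynomial BigOperators

noncomputable section Aux
variable {K : Type*} [Field K] [CharZero K]

lemma mulA_zero_right (L : OpA K) : mulA K L 0 = 0 := by
  simp [mulA, Finsupp.sum_zero_index]

lemma mulA_add_right (L M₁ M₂ : OpA K) :
    mulA K L (M₁ + M₂) = mulA K L M₁ + mulA K L M₂ := by
  unfold mulA
  have h : ∀ p a, (M₁ + M₂).sum (fun q b => Finsupp.single (p + q) (a * σv K p b))
      = M₁.sum (fun q b => Finsupp.single (p + q) (a * σv K p b))
        + M₂.sum (fun q b => Finsupp.single (p + q) (a * σv K p b)) := by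
    intro p a
    refine Finsupp.sum_add_index' (fun q => ?_) (fun q b₁ b₂ => ?_)
    · simp
    · simp [map_add, mul_add, Finsupp.single_add]
  calc L.sum (fun p a => (M₁ + M₂).sum fun q b => Finsupp.single (p + q) (a * σv K p b))
      = L.sum (fun p a => (M₁.sum fun q b => Finsupp.single (p + q) (a * σv K p b))
          + (M₂.sum fun q b => Finsupp.single (p + q) (a * σv K p b))) := by
        exact Finsupp.sum_congr fun p _ => h p (L p)
    _ = _ := by
        rw [Finsupp.sum]; rw [Finset.sum_add_distrib]; rfl

lemma odot_zero (α β lam μ : ℤ) (L : OpA K) : odot K α β lam μ L 0 = 0 := by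
  simp [odot, ιB, φB, Finsupp.mapDomain_zero, mulA_zero_right]

lemma odot_add (α β lam μ : ℤ) (L : OpA K) (M₁ M₂ : OpB K) :
    odot K α β lam μ L (M₁ + M₂) = odot K α β lam μ L M₁ + odot K α β lam μ L M₂ := by
  simp [odot, ιB, Finsupp.mapDomain_add, mulA_add_right, φB]

lemma odot_single (α β lam μ : ℤ) (hbez : α * lam + β * μ = 1)
    (L : ℤ →₀ Fxy K) (k : ℤ) (b : Fxy K) :
    odot K α β lam μ (ιy K L) (Finsupp.single k b) =
      ∑ j ∈ L.support, Finsupp.single (k + j * μ) (L j * (σyF K ^ j) b) := by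
  have h1 : mulA K (ιy K L) (ιB K α β (Finsupp.single k b))
      = (ιy K L).sum fun p a => Finsupp.single (p + (k*α, k*β)) (a * σv K p b) := by
    unfold mulA ιB
    rw [Finsupp.mapDomain_single]
    exact Finsupp.sum_congr fun p _ => Finsupp.sum_single_index (by simp)
  have h2 : ((ιy K L).sum fun p a => Finsupp.single (p + (k*α, k*β)) (a * σv K p b))
      = L.sum fun j a => Finsupp.single ((0, j) + (k*α, k*β)) (a * σv K (0, j) b) := by
    unfold ιy
    exact Finsupp.sum_mapDomain_index (by simp) (by intro p b₁ b₂; simp [add_mul, Finsupp.single_add])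
  rw [odot, h1, h2]
  unfold φB
  rw [Finsupp.sum, Finsupp.mapDomain_finset_sum]
  refine Finset.sum_congr rfl fun j hj => ?_
  rw [Finsupp.mapDomain_single]
  have hσ : σv K ((0:ℤ), j) = σyF K ^ j := by simp [σv]
  rw [hσ]
  simp only [Prod.mk_add_mk]
  congr 1
  linear_combination k * hbez
lemma φB_ιy (lam μ : ℤ) (L : ℤ →₀ Fxy K) :
    φB K lam μ (ιy K L) = Finsupp.mapDomain (fun j : ℤ => j * μ) L := by
  unfold φB ιy
  rw [← Finsupp.mapDomain_comp]
  have h : ((fun p : ℤ × ℤ => p.1 * lam + p.2 * μ) ∘ fun j : ℤ => ((0:ℤ), j))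
      = fun j : ℤ => j * μ := by funext j; simp
  rw [h]

end Aux


/-- Lemma `LEM:leftquorem`.
Let `L ∈ K(x,y)[S_y]` be nonzero (a nonzero Laurent operator in `S_y` supported on
nonnegative powers) and `M ∈ A_{λ,μ}`.  Then there exist `Q, R ∈ A_{λ,μ}` such that
`M = L ⊙ Q + R`, and `R` either is zero or satisfies
`0 ≤ lord(R) ≤ hord(R) < hord(φ_{λ,μ}(L))`. -/
theorem statement4 (K : Type*) [Field K] [CharZero K]
    (lam μ α β : ℤ) (hμ : 0 < μ) (hcop : IsCoprime lam μ)
    (hbez : α * lam + β * μ = 1) (hα : 0 ≤ α ∧ α < μ)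
    (hβ : lam ≠ 0 → |β| ≤ |lam|) (hβ0 : lam = 0 → α = 0 ∧ β = 1)
    (L : ℤ →₀ Fxy K) (hL : L ≠ 0) (hLpoly : ∀ j ∈ L.support, 0 ≤ j)
    (M : OpB K) :
    ∃ Q R : OpB K,
      M = odot K α β lam μ (ιy K L) Q + R ∧
        (R = 0 ∨
          (0 ≤ lord K R ∧ lord K R ≤ hord K R ∧
            hord K R < hord K (φB K lam μ (ιy K L)))) := by
  classical
  have hsupp : L.support.Nonempty := Finsupp.support_nonempty_iff.mpr hL
  set jmax := L.support.max' hsupp with hjmaxdef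
  have hjmax_mem : jmax ∈ L.support := Finset.max'_mem _ _
  set N : ℤ := jmax * μ with hNdef
  have hinj : Function.Injective (fun j : ℤ => j * μ) := fun a b h => by
    have : a * μ = b * μ := h
    exact mul_right_cancel₀ hμ.ne' this
  have hNmax : hord K (φB K lam μ (ιy K L)) = N := by
    rw [φB_ιy, hord, Finsupp.mapDomain_support_of_injective hinj]
    have himg : (L.support.image fun j : ℤ => j * μ).Nonempty := hsupp.image _
    rw [← Finset.coe_max' himg, WithBot.unbotD_coe]
    apply le_antisymm
    · apply Finset.max'_le
      intro y hy
      obtain ⟨j, hjm, rfl⟩ := Finset.mem_image.mp hy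
      exact mul_le_mul_of_nonneg_right (Finset.le_max' _ _ hjm) hμ.le
    · refine Finset.le_max' _ N ?_
      rw [hNdef]
      exact Finset.mem_image_of_mem _ hjmax_mem
  set Good : OpB K → Prop := fun M' => ∃ Q R : OpB K,
    M' = odot K α β lam μ (ιy K L) Q + R ∧ ∀ i ∈ R.support, 0 ≤ i ∧ i < N
    with hGood
  have good_add : ∀ M₁ M₂, Good M₁ → Good M₂ → Good (M₁ + M₂) := by
    rintro M₁ M₂ ⟨Q₁, R₁, rfl, h₁⟩ ⟨Q₂, R₂, rfl, h₂⟩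
    refine ⟨Q₁ + Q₂, R₁ + R₂, by rw [odot_add]; abel, fun i hi => ?_⟩
    rcases Finset.mem_union.mp (Finsupp.support_add hi) with h | h
    exacts [h₁ i h, h₂ i h]
  have good_zero : Good 0 := ⟨0, 0, by rw [odot_zero]; simp, by simp⟩
  have good_sum : ∀ (s : Finset ℤ) (f : ℤ → OpB K),
      (∀ j ∈ s, Good (f j)) → Good (∑ j ∈ s, f j) := by
    intro s f hf
    induction s using Finset.induction_on with
    | empty => simpa using good_zero
    | @insert _ _ hns ih =>
      rw [Finset.sum_insert hns]
      exact good_add _ _ (hf _ (Finset.mem_insert_self _ _))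
        (ih fun j hj => hf j (Finset.mem_insert_of_mem hj))
  have good_base : ∀ (n : ℤ), 0 ≤ n → n < N → ∀ c, Good (Finsupp.single n c) := by
    intro n h0 h1 c
    refine ⟨0, Finsupp.single n c, by rw [odot_zero, zero_add], fun i hi => ?_⟩
    have := Finsupp.support_single_subset hi
    rw [Finset.mem_singleton] at this
    subst this; exact ⟨h0, h1⟩
  have inv_apply : ∀ (j : ℤ) (x : Fxy K), (σyF K ^ j) ((σyF K ^ j)⁻¹ x) = x := by
    intro j x
    have h : ((σyF K ^ j) * (σyF K ^ j)⁻¹) x = x := by rw [mul_inv_cancel]; rfl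
    exact h
  have key : ∀ m : ℕ, ∀ n : ℤ, n.natAbs = m → ∀ c, Good (Finsupp.single n c) := by
    intro m
    induction m using Nat.strong_induction_on with
    | _ m ih =>
      intro n hm c
      by_cases hbase : 0 ≤ n ∧ n < N
      · exact good_base n hbase.1 hbase.2 c
      have main : ∀ j0 ∈ L.support,
          (∀ j ∈ L.support.erase j0,
            (0 ≤ n - j0 * μ + j * μ ∧ n - j0 * μ + j * μ < N) ∨
              (n - j0 * μ + j * μ).natAbs < m) →
          Good (Finsupp.single n c) := by
        intro j0 hj0 hjs
        set k : ℤ := n - j0 * μ with hk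
        set b : Fxy K := (σyF K ^ j0)⁻¹ (c / L j0) with hb
        have hLj0 : L j0 ≠ 0 := Finsupp.mem_support_iff.mp hj0
        have hcoef : L j0 * (σyF K ^ j0) b = c := by
          rw [hb, inv_apply]
          field_simp
        have heq : odot K α β lam μ (ιy K L) (Finsupp.single k b)
            = Finsupp.single n c + ∑ j ∈ L.support.erase j0,
                Finsupp.single (k + j * μ) (L j * (σyF K ^ j) b) := by
          rw [odot_single α β lam μ hbez L k b, ← Finset.add_sum_erase _ _ hj0]
          congr 1
          rw [hcoef]
          congr 1
          omega
        have heq2 : Finsupp.single n c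
            = odot K α β lam μ (ιy K L) (Finsupp.single k b)
              + ∑ j ∈ L.support.erase j0,
                  Finsupp.single (k + j * μ) (-(L j * (σyF K ^ j) b)) := by
          rw [heq]
          have : ∑ j ∈ L.support.erase j0,
              Finsupp.single (k + j * μ) (-(L j * (σyF K ^ j) b))
              = -∑ j ∈ L.support.erase j0,
                  Finsupp.single (k + j * μ) (L j * (σyF K ^ j) b) := by
            rw [← Finset.sum_neg_distrib]
            exact Finset.sum_congr rfl fun j _ => Finsupp.single_neg _ _
          rw [this]
          abel
        rw [heq2]
        refine good_add _ _ ⟨Finsupp.single k b, 0, by simp, by simp⟩ ?_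
        refine good_sum _ _ fun j hj => ?_
        rcases hjs j hj with ⟨h0, h1⟩ | hlt
        · exact good_base _ h0 h1 _
        · exact ih _ hlt _ rfl _
      by_cases hn : 0 ≤ n
      · refine main jmax hjmax_mem fun j hj => ?_
        have hjm : j ∈ L.support := Finset.mem_of_mem_erase hj
        have hjne : j ≠ jmax := Finset.ne_of_mem_erase hj
        have hjlt : j < jmax := lt_of_le_of_ne (Finset.le_max' _ _ hjm) hjne
        have hB : j * μ < jmax * μ := mul_lt_mul_of_pos_right hjlt hμ
        have hB0 : 0 ≤ j * μ := mul_nonneg (hLpoly j hjm) hμ.le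
        omega
      · refine main (L.support.min' hsupp) (Finset.min'_mem _ _) fun j hj => ?_
        have hjm : j ∈ L.support := Finset.mem_of_mem_erase hj
        have hjne : j ≠ L.support.min' hsupp := Finset.ne_of_mem_erase hj
        have hjgt : L.support.min' hsupp < j :=
          lt_of_le_of_ne (Finset.min'_le _ _ hjm) (Ne.symm hjne)
        have hA : L.support.min' hsupp * μ < j * μ := mul_lt_mul_of_pos_right hjgt hμ
        have hA0 : 0 ≤ L.support.min' hsupp * μ :=
          mul_nonneg (hLpoly _ (Finset.min'_mem _ _)) hμ.le
        have hC : j * μ ≤ jmax * μ :=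
          mul_le_mul_of_nonneg_right (Finset.le_max' _ _ hjm) hμ.le
        omega
  have goodM : Good M := by
    induction M using Finsupp.induction with
    | zero => exact good_zero
    | @single_add n c f hnf hc ihf => exact good_add _ _ (key _ n rfl c) ihf
  obtain ⟨Q, R, hMeq, hR⟩ := goodM
  refine ⟨Q, R, hMeq, ?_⟩
  by_cases hR0 : R = 0
  · exact Or.inl hR0
  · right
    have hRsupp : R.support.Nonempty := Finsupp.support_nonempty_iff.mpr hR0
    have hlord : lord K R = R.support.min' hRsupp := by
      rw [lord, ← Finset.coe_min' hRsupp, WithTop.untopD_coe]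
    have hhord : hord K R = R.support.max' hRsupp := by
      rw [hord, ← Finset.coe_max' hRsupp, WithBot.unbotD_coe]
    refine ⟨?_, ?_, ?_⟩
    · rw [hlord]; exact (hR _ (Finset.min'_mem _ _)).1
    · rw [hlord, hhord]; exact Finset.min'_le _ _ (Finset.max'_mem _ _)
    · rw [hhord, hNmax]; exact (hR _ (Finset.max'_mem _ _)).2
end

section
/- Let f ∈ K(x,y) have the form f = M(1/p(λx + μy)^k), where (λ,μ) is a pair of coprime integers with μ > 0, k is a positive integer, p ∈ K[z] is monic and irreducible, and M = Σ_{i ∈ Z} a_i S_{λ,μ}^i with a_i ∈ K(x)[y], finitely many nonzero, and deg_y(a_i) < deg_z(p). Let L ∈ K[x][S_x] be a nonzero operator. Then L is a telescoper for f if and only if there exists Q ∈ A_{λ,μ} such that L ⊙ M = (S_y − 1) ⊙ Q; and when this is the case, Q(1/p(λx + μy)^k) is a certificate corresponding to L. -/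
open Polynomial BigOperators

set_option linter.unusedSectionVars false
set_option linter.unusedVariables false
set_option maxHeartbeats 1000000

noncomputable section
namespace S8
section



lemma aut_cancel {B : Type*} [Semiring B] (u : RingAut B) (z : B) : u⁻¹ (u z) = z := by
  have h : (u⁻¹ * u) z = (1 : RingAut B) z := by rw [inv_mul_cancel]
  exact h

lemma aut_mul_apply {B : Type*} [Semiring B] (u v : RingAut B) (z : B) :
    (u * v) z = u (v z) := rfl

lemma compat_zpow {A B : Type*} [Semiring A] [Semiring B] (ι : A →+* B)
    (s : RingAut A) (t : RingAut B) (h : ∀ a, t (ι a) = ι (s a)) :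
    ∀ (n : ℤ) (a : A), (t ^ n) (ι a) = ι ((s ^ n) a) := by
  have hnat : ∀ (n : ℕ) (a : A), (t ^ n) (ι a) = ι ((s ^ n) a) := by
    intro n
    induction n with
    | zero => intro a; rfl
    | succ n ih =>
        intro a
        rw [pow_succ, pow_succ, aut_mul_apply, aut_mul_apply, h, ih]
  have hinvnat : ∀ (n : ℕ) (a : A), (t ^ n)⁻¹ (ι a) = ι ((s ^ n)⁻¹ a) := by
    intro n a
    have h2 : (t ^ n) (ι ((s ^ n)⁻¹ a)) = ι a := by
      rw [hnat]
      congr 1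
      have : (s ^ n) ((s ^ n)⁻¹ a) = ((s ^ n) * (s ^ n)⁻¹) a := rfl
      rw [this, mul_inv_cancel]; rfl
    rw [← h2, aut_cancel]
  intro n a
  cases n with
  | ofNat m => rw [Int.ofNat_eq_coe, zpow_natCast, zpow_natCast, hnat]
  | negSucc m => rw [zpow_negSucc, zpow_negSucc, hinvnat]

variable (K : Type*) [Field K] [CharZero K]

lemma σxF_ι (a : Rxy K) : σxF K (ι₀ K a) = ι₀ K (σxR K a) :=
  IsFractionRing.ringEquivOfRingEquiv_algebraMap _ a

lemma σyF_ι (a : Rxy K) : σyF K (ι₀ K a) = ι₀ K (σyR K a) :=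
  IsFractionRing.ringEquivOfRingEquiv_algebraMap _ a

lemma σxR_C (u : Polynomial K) : σxR K (C u) = C (σxK K u) := by
  show mapEquiv _ _ = _
  rw [mapEquiv_apply, map_C]; rfl

lemma σxR_X : σxR K X = X := by
  show mapEquiv _ _ = _
  rw [mapEquiv_apply, map_X]

lemma σyR_C (u : Polynomial K) : σyR K (C u) = C u := by
  show (shiftPoly _) (C u) = _
  rw [shiftPoly]
  simp

lemma σyR_X : σyR K X = X + 1 := by
  show (shiftPoly _) X = _
  rw [shiftPoly]
  simp

lemma σxK_C (c : K) : σxK K (Polynomial.C c) = Polynomial.C c := by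
  show (shiftPoly _) (C c) = _
  rw [shiftPoly]; simp

lemma σxK_X : σxK K X = X + 1 := by
  show (shiftPoly _) X = _
  rw [shiftPoly]; simp

lemma commR (r : Rxy K) : σxR K (σyR K r) = σyR K (σxR K r) := by
  have h : ((σxR K) : Rxy K →+* Rxy K).comp ((σyR K) : Rxy K →+* Rxy K)
      = ((σyR K) : Rxy K →+* Rxy K).comp ((σxR K) : Rxy K →+* Rxy K) := by
    apply Polynomial.ringHom_ext
    · intro a
      simp [σyR_C, σxR_C]
    · simp [σyR_X, σxR_X, σyR_C, map_add]
  exact RingHom.congr_fun h r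

lemma commF : Commute (σxF K) (σyF K) := by
  have key : ∀ a : Rxy K, σxF K (σyF K (ι₀ K a)) = σyF K (σxF K (ι₀ K a)) := by
    intro a; rw [σyF_ι, σxF_ι, σxF_ι, σyF_ι, commR]
  have h2 : ∀ f : Fxy K, σxF K (σyF K f) = σyF K (σxF K f) := by
    intro f
    obtain ⟨a, b, -, hab⟩ := IsFractionRing.div_surjective (A := Rxy K) f
    rw [← hab, map_div₀, map_div₀, map_div₀, map_div₀]
    exact congrArg₂ (· / ·) (key a) (key b)
  exact RingEquiv.ext h2

lemma commF_zpow (m n : ℤ) : Commute (σxF K ^ m) (σyF K ^ n) :=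
  (commF K).zpow_zpow m n

lemma σv_add (v w : ℤ × ℤ) : σv K (v + w) = σv K v * σv K w := by
  rw [σv, σv, σv]
  show σxF K ^ (v.1 + w.1) * σyF K ^ (v.2 + w.2) = _
  rw [zpow_add, zpow_add]
  rw [mul_assoc, mul_assoc]
  congr 1
  rw [← mul_assoc, (commF_zpow K w.1 v.2).eq, mul_assoc]

lemma σv_apply_add (v w : ℤ × ℤ) (f : Fxy K) : σv K (v + w) f = σv K v (σv K w f) := by
  rw [σv_add]; rfl

lemma σv_τ (α β : ℤ) (i : ℤ) : σv K (i * α, i * β) = τF K α β ^ i := by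
  rw [σv, τF]
  show σxF K ^ (i * α) * σyF K ^ (i * β) = _
  rw [(commF_zpow K α β).mul_zpow, mul_comm i α, mul_comm i β, zpow_mul, zpow_mul]


end
section

variable (K : Type*) [Field K] [CharZero K]

lemma ιx₀_eq (u : Polynomial K) : ιx₀ K u = ι₀ K (C u) := rfl
lemma ιK_eq (c : K) : ιK K c = ι₀ K (C (C c)) := rfl

lemma σxF_ιx (u : Polynomial K) : σxF K (ιx₀ K u) = ιx₀ K (σxK K u) := by
  rw [ιx₀_eq, σxF_ι, σxR_C]; rfl
lemma σyF_ιx (u : Polynomial K) : σyF K (ιx₀ K u) = ιx₀ K u := by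
  rw [ιx₀_eq, σyF_ι, σyR_C]
lemma σxF_ιK (c : K) : σxF K (ιK K c) = ιK K c := by
  rw [ιK_eq, σxF_ι, σxR_C, σxK_C]
lemma σyF_ιK (c : K) : σyF K (ιK K c) = ιK K c := by
  rw [ιK_eq, σyF_ι, σyR_C]
lemma σxF_x : σxF K (xF K) = xF K + 1 := by
  rw [xF, σxF_ιx, σxK_X, map_add, map_one]
lemma σxF_y : σxF K (yF K) = yF K := by rw [yF, σxF_ι, σxR_X]
lemma σyF_y : σyF K (yF K) = yF K + 1 := by rw [yF, σyF_ι, σyR_X, map_add, map_one]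
lemma σyF_x : σyF K (xF K) = xF K := by rw [xF, σyF_ιx]

/-- The element `λ·x + μ·y` of `K(x,y)`. -/
def zF (lam μ : ℤ) : Fxy K := (lam : Fxy K) * xF K + (μ : Fxy K) * yF K

variable (lam μ : ℤ)

/-- `φ` fixes the constants `K` and shifts `z = λx+μy` by the integer `t`. -/
def FixShift (φ : RingAut (Fxy K)) (t : ℤ) : Prop :=
  (∀ c : K, φ (ιK K c) = ιK K c) ∧ φ (zF K lam μ) = zF K lam μ + t

lemma fixShift_σxF : FixShift K lam μ (σxF K) lam := by
  constructor
  · exact σxF_ιK K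
  · simp only [zF, map_add, map_mul, map_intCast, σxF_x, σxF_y]
    ring

lemma fixShift_σyF : FixShift K lam μ (σyF K) μ := by
  constructor
  · exact σyF_ιK K
  · simp only [zF, map_add, map_mul, map_intCast, σyF_x, σyF_y]
    ring

lemma FixShift.mul {φ ψ : RingAut (Fxy K)} {t s : ℤ} (hφ : FixShift K lam μ φ t)
    (hψ : FixShift K lam μ ψ s) : FixShift K lam μ (φ * ψ) (t + s) := by
  constructor
  · intro c; rw [aut_mul_apply, hψ.1, hφ.1]
  · rw [aut_mul_apply, hψ.2, map_add, hφ.2, map_intCast]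
    push_cast; ring

lemma FixShift.one : FixShift K lam μ 1 0 := by
  constructor
  · intro c; rfl
  · show zF K lam μ = _; simp

lemma FixShift.inv {φ : RingAut (Fxy K)} {t : ℤ} (hφ : FixShift K lam μ φ t) :
    FixShift K lam μ φ⁻¹ (-t) := by
  constructor
  · intro c
    conv_lhs => rw [← hφ.1 c]
    rw [aut_cancel]
  · have h2 : φ (zF K lam μ + ((-t : ℤ) : Fxy K)) = zF K lam μ := by
      rw [map_add, hφ.2, map_intCast]; push_cast; ring
    calc φ⁻¹ (zF K lam μ) = φ⁻¹ (φ (zF K lam μ + ((-t : ℤ) : Fxy K))) := by rw [h2]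
      _ = zF K lam μ + ((-t : ℤ) : Fxy K) := aut_cancel _ _

lemma FixShift.zpow {φ : RingAut (Fxy K)} {t : ℤ} (hφ : FixShift K lam μ φ t) (n : ℤ) :
    FixShift K lam μ (φ ^ n) (n * t) := by
  have hnat : ∀ m : ℕ, FixShift K lam μ (φ ^ m) (m * t) := by
    intro m
    induction m with
    | zero => simpa using FixShift.one K lam μ
    | succ m ih =>
        have h := (ih.mul K lam μ) hφ
        rw [← pow_succ] at h
        have e : ((m : ℤ) * t + t) = (((m + 1 : ℕ) : ℤ) * t) := by push_cast; ring
        rwa [e] at h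
  cases n with
  | ofNat m => rw [Int.ofNat_eq_coe, zpow_natCast]; exact hnat m
  | negSucc m =>
      rw [zpow_negSucc]
      have h := (hnat (m + 1)).inv K lam μ
      have e : (-(((m + 1 : ℕ) : ℤ) * t)) = Int.negSucc m * t := by
        rw [Int.negSucc_eq]; push_cast; ring
      rwa [e] at h

lemma fixShift_σv (v : ℤ × ℤ) : FixShift K lam μ (σv K v) (v.1 * lam + v.2 * μ) := by
  rw [σv]
  exact ((fixShift_σxF K lam μ).zpow K lam μ v.1).mul K lam μ
    ((fixShift_σyF K lam μ).zpow K lam μ v.2)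


end
section

variable (K : Type*) [Field K] [CharZero K] (lam μ : ℤ)

/-- `1/p(z+c)^k` as an element of `K(x,y)`, where `z = λx + μy`. -/
def Gq (p : Polynomial K) (k : ℕ) (c : ℤ) : Fxy K :=
  (Polynomial.eval₂ (ιK K) (zF K lam μ + (c : Fxy K)) p ^ k)⁻¹

lemma FixShift.Gq_eval {φ : RingAut (Fxy K)} {t : ℤ} (hφ : FixShift K lam μ φ t)
    (p : Polynomial K) (k : ℕ) (c : ℤ) :
    φ (Gq K lam μ p k c) = Gq K lam μ p k (c + t) := by
  rw [Gq, Gq, map_inv₀, map_pow]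
  have h1 : φ (Polynomial.eval₂ (ιK K) (zF K lam μ + (c : Fxy K)) p)
      = Polynomial.eval₂ ((φ : Fxy K →+* Fxy K).comp (ιK K))
          (φ (zF K lam μ + (c : Fxy K))) p :=
    Polynomial.hom_eval₂ p (ιK K) (φ : Fxy K →+* Fxy K) _
  rw [h1]
  have hcomp : ((φ : Fxy K →+* Fxy K).comp (ιK K)) = ιK K := RingHom.ext fun c => hφ.1 c
  rw [hcomp, map_add, hφ.2, map_intCast]
  congr 3
  push_cast; ring

lemma aut_cancel' {B : Type*} [Semiring B] (u : RingAut B) (z : B) : u (u⁻¹ z) = z := by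
  have := aut_cancel u⁻¹ z; rwa [inv_inv] at this

lemma summ_zero : IsSummableY K 0 := ⟨0, by simp⟩

lemma summ_add {f g : Fxy K} (hf : IsSummableY K f) (hg : IsSummableY K g) :
    IsSummableY K (f + g) := by
  obtain ⟨a, ha⟩ := hf; obtain ⟨b, hb⟩ := hg
  exact ⟨a + b, by rw [ha, hb, map_add]; ring⟩

lemma summ_neg {f : Fxy K} (hf : IsSummableY K f) : IsSummableY K (-f) := by
  obtain ⟨a, ha⟩ := hf
  exact ⟨-a, by rw [ha, map_neg]; ring⟩

lemma summ_sub {f g : Fxy K} (hf : IsSummableY K f) (hg : IsSummableY K g) :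
    IsSummableY K (f - g) := by
  rw [sub_eq_add_neg]; exact summ_add K hf (summ_neg K hg)

lemma summ_sum {s : Finset ℤ} {F : ℤ → Fxy K} (h : ∀ j ∈ s, IsSummableY K (F j)) :
    IsSummableY K (∑ j ∈ s, F j) := by
  classical
  induction s using Finset.induction_on with
  | empty => simpa using summ_zero K
  | insert a s' hnot ih =>
      rw [Finset.sum_insert hnot]
      exact summ_add K (h a (Finset.mem_insert_self a s'))
        (ih fun j hj => h j (Finset.mem_insert_of_mem hj))

lemma summ_shift (s : ℤ) (w : Fxy K) : IsSummableY K ((σyF K ^ s) w - w) := by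
  have hnat : ∀ (m : ℕ) (w : Fxy K), IsSummableY K ((σyF K ^ m) w - w) := by
    intro m
    induction m with
    | zero =>
        intro w
        have h0 : (σyF K ^ (0 : ℕ)) w - w = 0 := by
          rw [pow_zero]
          show w - w = 0
          ring
        rw [h0]; exact summ_zero K
    | succ m ih =>
        intro w
        have h1 : (σyF K ^ (m + 1)) w - w
            = (σyF K ((σyF K ^ m) w) - (σyF K ^ m) w) + ((σyF K ^ m) w - w) := by
          rw [pow_succ']
          show σyF K ((σyF K ^ m) w) - w = _
          ring
        rw [h1]
        exact summ_add K ⟨(σyF K ^ m) w, rfl⟩ (ih w)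
  cases s with
  | ofNat m => rw [Int.ofNat_eq_coe, zpow_natCast]; exact hnat m w
  | negSucc m =>
      rw [zpow_negSucc]
      have h2 : (σyF K ^ (m + 1))⁻¹ w - w
          = -((σyF K ^ (m + 1)) ((σyF K ^ (m + 1))⁻¹ w) - (σyF K ^ (m + 1))⁻¹ w) := by
        rw [aut_cancel']; ring
      rw [h2]
      exact summ_neg K (hnat (m + 1) _)


end
section

variable (K : Type*) [Field K] [CharZero K] (α β lam μ : ℤ)

lemma σv_x (n : ℤ) : σv K (n, 0) = σxF K ^ n := by
  rw [σv]; simp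

lemma σv_zero_one : σv K ((0 : ℤ), (1 : ℤ)) = σyF K := by
  rw [σv]; simp

lemma σv_zero_zero : σv K ((0 : ℤ), (0 : ℤ)) = 1 := by
  rw [σv]; simp

lemma applyA_mulA (L N : OpA K) (f : Fxy K) :
    applyA K (mulA K L N) f = applyA K L (applyA K N f) := by
  rw [mulA]
  simp only [applyA]
  rw [Finsupp.sum_sum_index (h := fun v a => a * σv K v f)
    (fun v => zero_mul _) (fun v b c => add_mul _ _ _)]
  apply Finsupp.sum_congr
  intro p _
  rw [Finsupp.sum_sum_index (h := fun v a => a * σv K v f)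
    (fun v => zero_mul _) (fun v b c => add_mul _ _ _)]
  rw [map_finsuppSum, Finsupp.mul_sum]
  apply Finsupp.sum_congr
  intro q _
  rw [Finsupp.sum_single_index (h := fun v a => a * σv K v f) (zero_mul _),
    σv_apply_add, map_mul, mul_assoc]

lemma applyA_ιB (M : OpB K) (f : Fxy K) :
    applyA K (ιB K α β M) f = applyB K α β M f := by
  rw [ιB, applyA,
    Finsupp.sum_mapDomain_index (h := fun v a => a * σv K v f)
      (fun b => zero_mul _) (fun b m1 m2 => add_mul _ _ _), applyB]
  apply Finsupp.sum_congr
  intro i _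
  rw [σv_τ]

lemma applyB_φB (P : OpA K) (g : Fxy K)
    (hg : ∀ v : ℤ × ℤ, σv K v g = (τF K α β ^ (v.1 * lam + v.2 * μ)) g) :
    applyB K α β (φB K lam μ P) g = applyA K P g := by
  rw [φB, applyB,
    Finsupp.sum_mapDomain_index (h := fun i a => a * (τF K α β ^ i) g)
      (fun b => zero_mul _) (fun b m1 m2 => add_mul _ _ _), applyA]
  apply Finsupp.sum_congr
  intro v _
  rw [hg]

lemma applyA_SyOne (h : Fxy K) : applyA K (SyOne K) h = σyF K h - h := by
  rw [SyOne, applyA, Finsupp.sum_sub_index (h := fun v a => a * σv K v h)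
    (fun v b c => sub_mul _ _ _)]
  rw [Finsupp.sum_single_index (h := fun v a => a * σv K v h) (zero_mul _),
    Finsupp.sum_single_index (h := fun v a => a * σv K v h) (zero_mul _),
    one_mul, one_mul, σv_zero_one, σv_zero_zero]
  rfl

lemma mapDomain_sub' {A B M : Type*} [AddCommGroup M] (f : A → B) (X Y : A →₀ M) :
    Finsupp.mapDomain f (X - Y) = Finsupp.mapDomain f X - Finsupp.mapDomain f Y :=
  map_sub (Finsupp.mapDomain.addMonoidHom f) X Y

lemma mapDomain_sum' {A B γ N M : Type*} [Zero N] [AddCommMonoid M] (f : A → B)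
    (s : γ →₀ N) (v : γ → N → A →₀ M) :
    Finsupp.mapDomain f (s.sum v) = s.sum fun a b => Finsupp.mapDomain f (v a b) :=
  map_finsuppSum (Finsupp.mapDomain.addMonoidHom f) s v

lemma φB_sub (X Y : OpA K) :
    φB K lam μ (X - Y) = φB K lam μ X - φB K lam μ Y := by
  rw [φB, φB, φB]; exact mapDomain_sub' _ _ _

lemma φB_sum {γ N : Type*} [Zero N] (s : γ →₀ N) (v : γ → N → OpA K) :
    φB K lam μ (s.sum v) = s.sum fun a b => φB K lam μ (v a b) := by
  rw [φB]
  rw [mapDomain_sum' (fun p : ℤ × ℤ => p.1 * lam + p.2 * μ) s v]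
  rfl

lemma φB_ιB (hbez : α * lam + β * μ = 1) (Q : OpB K) :
    φB K lam μ (ιB K α β Q) = Q := by
  rw [φB, ιB, ← Finsupp.mapDomain_comp]
  have h : ((fun p : ℤ × ℤ => p.1 * lam + p.2 * μ) ∘ (fun i : ℤ => (i * α, i * β))) = id := by
    funext i
    show i * α * lam + i * β * μ = i
    calc i * α * lam + i * β * μ = i * (α * lam + β * μ) := by ring
      _ = i := by rw [hbez, mul_one]
  rw [h, Finsupp.mapDomain_id]

/-- The operator `σy ∘ shift-by-μ` on `A_{λ,μ}`; `(S_y - 1) ⊙ Q = TQ - Q`. -/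
def TQ (Q : OpB K) : OpB K :=
  Finsupp.mapDomain (· + μ) (Q.mapRange (σyF K) (map_zero _))

lemma φB_add (X Y : OpA K) :
    φB K lam μ (X + Y) = φB K lam μ X + φB K lam μ Y := by
  rw [φB, φB, φB, Finsupp.mapDomain_add]

lemma φB_single (v : ℤ × ℤ) (c : Fxy K) :
    φB K lam μ (Finsupp.single v c) = Finsupp.single (v.1 * lam + v.2 * μ) c := by
  rw [φB, Finsupp.mapDomain_single]

lemma TQ_eq_sum (Q : OpB K) :
    TQ K μ Q = Q.sum fun i b => Finsupp.single (i + μ) (σyF K b) := by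
  rw [TQ, Finsupp.mapDomain]
  rw [Finsupp.sum_mapRange_index (by simp)]

lemma odot_SyOne (hbez : α * lam + β * μ = 1) (Q : OpB K) :
    odot K α β lam μ (SyOne K) Q = TQ K μ Q - Q := by
  rw [odot, SyOne, mulA]
  rw [Finsupp.sum_sub_index (by
    intro p a1 a2
    simp only [sub_mul, Finsupp.single_sub, Finsupp.sum_sub])]
  rw [Finsupp.sum_single_index (by simp), Finsupp.sum_single_index (by simp)]
  rw [φB_sub]
  congr 1
  · -- first piece
    rw [φB_sum, ιB]
    rw [Finsupp.sum_mapDomain_index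
      (h := fun q b => φB K lam μ
        (Finsupp.single (((0 : ℤ), (1 : ℤ)) + q) ((1 : Fxy K) * σv K ((0 : ℤ), (1 : ℤ)) b)))
      (by intro b; simp [φB]) (by
        intro b m1 m2
        simp only [map_add, mul_add, Finsupp.single_add, φB_add])]
    rw [TQ_eq_sum]
    apply Finsupp.sum_congr
    intro i _
    rw [φB_single]
    have hpair : (((0 : ℤ), (1 : ℤ)) + (i * α, i * β)) = ((0 : ℤ) + i * α, (1 : ℤ) + i * β) := rfl
    rw [hpair]
    have hidx : ((0 : ℤ) + i * α) * lam + ((1 : ℤ) + i * β) * μ = i + μ := by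
      calc ((0 : ℤ) + i * α) * lam + ((1 : ℤ) + i * β) * μ
          = i * (α * lam + β * μ) + μ := by ring
        _ = i + μ := by rw [hbez, mul_one]
    rw [hidx, σv_zero_one, one_mul]
  · -- second piece
    have h2 : ((ιB K α β Q).sum fun q b =>
        Finsupp.single (((0 : ℤ), (0 : ℤ)) + q) ((1 : Fxy K) * σv K ((0 : ℤ), (0 : ℤ)) b))
        = ιB K α β Q := by
      have hsg : ∀ (q : ℤ × ℤ) (b : Fxy K),
          Finsupp.single (((0 : ℤ), (0 : ℤ)) + q) ((1 : Fxy K) * σv K ((0 : ℤ), (0 : ℤ)) b)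
          = Finsupp.single q b := by
        intro q b
        rw [σv_zero_zero]
        show Finsupp.single (((0 : ℤ), (0 : ℤ)) + q) ((1 : Fxy K) * b) = _
        rw [one_mul, show ((0 : ℤ), (0 : ℤ)) + q = q by simp]
      rw [Finsupp.sum_congr (fun q _ => hsg q _)]
      exact Finsupp.sum_single _
    rw [h2, φB_ιB K α β lam μ hbez]

lemma odot_ιxOp (hbez : α * lam + β * μ = 1) (L : ℕ →₀ Polynomial K) (M : OpB K) :
    odot K α β lam μ (ιxOp K L) M =
      L.sum fun ℓ c => M.sum fun i b =>
        Finsupp.single ((ℓ : ℤ) * lam + i) (ιx₀ K c * (σxF K ^ (ℓ : ℤ)) b) := by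
  rw [odot, ιxOp, mulA]
  rw [Finsupp.sum_sum_index (by
      intro p
      simp) (by
      intro p a1 a2
      simp only [add_mul, Finsupp.single_add, Finsupp.sum_add])]
  rw [φB_sum]
  apply Finsupp.sum_congr
  intro ℓ _
  rw [Finsupp.sum_single_index (by simp)]
  rw [φB_sum, ιB]
  rw [Finsupp.sum_mapDomain_index
    (h := fun q b => φB K lam μ
      (Finsupp.single (((ℓ : ℤ), (0 : ℤ)) + q) (ιx₀ K (L ℓ) * σv K ((ℓ : ℤ), (0 : ℤ)) b)))
    (by intro b; simp [φB]) (by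
      intro b m1 m2
      simp only [map_add, mul_add, Finsupp.single_add, φB_add])]
  apply Finsupp.sum_congr
  intro i _
  rw [φB_single]
  have hpair : (((ℓ : ℤ), (0 : ℤ)) + (i * α, i * β)) = ((ℓ : ℤ) + i * α, (0 : ℤ) + i * β) := rfl
  rw [hpair]
  have hidx : ((ℓ : ℤ) + i * α) * lam + ((0 : ℤ) + i * β) * μ = (ℓ : ℤ) * lam + i := by
    calc ((ℓ : ℤ) + i * α) * lam + ((0 : ℤ) + i * β) * μ
        = (ℓ : ℤ) * lam + i * (α * lam + β * μ) := by ring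
      _ = _ := by rw [hbez, mul_one]
  rw [hidx, σv_x]

lemma TQ_apply (Q : OpB K) (m : ℤ) : TQ K μ Q m = σyF K (Q (m - μ)) := by
  rw [TQ]
  conv_lhs => rw [show m = (m - μ) + μ by ring]
  rw [Finsupp.mapDomain_apply (add_left_injective μ), Finsupp.mapRange_apply]


end
section


/-- Transport of irreducibility along a pair of mutually inverse ring homs. -/
lemma irreducible_of_homs {A B : Type*} [CommRing A] [CommRing B]
    (F : A →+* B) (G : B →+* A) (hGF : ∀ a, G (F a) = a) (hFG : ∀ b, F (G b) = b)
    {a : A} (ha : Irreducible a) : Irreducible (F a) := by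
  constructor
  · intro hu
    have := hu.map G
    rw [hGF] at this
    exact ha.not_isUnit this
  · intro x y hxy
    have h2 : a = G x * G y := by
      have := congrArg G hxy
      rw [hGF, map_mul] at this
      exact this
    rcases ha.isUnit_or_isUnit h2 with h | h
    · left
      have := h.map F
      rwa [hFG] at this
    · right
      have := h.map F
      rwa [hFG] at this

variable (K : Type*) [Field K] [CharZero K]

/-- Map `K[Y] → K[x][Y]` of a monic irreducible stays irreducible. -/
lemma irreducible_mapC {q : Polynomial K} (hq : Irreducible q) (hm : q.Monic) :
    Irreducible (q.map (C : K →+* Polynomial K)) := by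
  have hE : ∀ w : Polynomial K,
      (w.map (C : K →+* Polynomial K)).map (evalRingHom (0 : K)) = w := by
    intro w
    rw [Polynomial.map_map]
    have : (evalRingHom (0 : K)).comp (C : K →+* Polynomial K) = RingHom.id K := by
      ext a; simp
    rw [this, Polynomial.map_id]
  have hmm : (q.map (C : K →+* Polynomial K)).Monic := hm.map _
  constructor
  · intro hu
    have := hu.map (Polynomial.mapRingHom (evalRingHom (0 : K)))
    rw [Polynomial.coe_mapRingHom, hE] at this
    exact hq.not_isUnit this
  · intro f g hfg
    have hq' : q = f.map (evalRingHom (0 : K)) * g.map (evalRingHom (0 : K)) := by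
      have := congrArg (Polynomial.map (evalRingHom (0 : K))) hfg
      rw [hE, Polynomial.map_mul] at this
      exact this
    have hlc : f.leadingCoeff * g.leadingCoeff = 1 := by
      have := hmm.leadingCoeff
      rwa [hfg, Polynomial.leadingCoeff_mul] at this
    have hlf : IsUnit f.leadingCoeff := IsUnit.of_mul_eq_one _ hlc
    have hlg : IsUnit g.leadingCoeff := IsUnit.of_mul_eq_one _ (by rwa [mul_comm] at hlc)
    have key : ∀ h : Polynomial (Polynomial K), IsUnit h.leadingCoeff →
        IsUnit (h.map (evalRingHom (0 : K))) → IsUnit h := by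
      intro h hl hu
      obtain ⟨r, hr, hCr⟩ := Polynomial.isUnit_iff.mp hl
      have hne : (evalRingHom (0 : K)) h.leadingCoeff ≠ 0 := by
        rw [← hCr]
        simpa using hr.ne_zero
      have hdeg : (h.map (evalRingHom (0 : K))).natDegree = h.natDegree :=
        Polynomial.natDegree_map_of_leadingCoeff_ne_zero _ hne
      have h0 : h.natDegree = 0 := by
        rw [← hdeg]
        exact Polynomial.natDegree_eq_zero_of_isUnit hu
      obtain ⟨a, ha⟩ := Polynomial.natDegree_eq_zero.mp h0
      rw [← ha]
      apply Polynomial.isUnit_C.mpr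
      have ha2 : a = h.leadingCoeff := by
        rw [← ha]; simp
      rw [ha2]
      exact hl
    rcases hq.isUnit_or_isUnit hq' with h | h
    · exact Or.inl (key f hlf h)
    · exact Or.inr (key g hlg h)

/-- `a·x + b·y` as an element of `K[x][y]`. -/
def lin (a b : K) : Rxy K := C (C a * X) + C (C b) * X

lemma lin_comb (a b c d e f : K) :
    C (C a) * lin K c d + C (C b) * lin K e f = lin K (a * c + b * e) (a * d + b * f) := by
  simp only [lin, map_add, map_mul]
  ring

lemma lin_one_zero : lin K 1 0 = C X := by simp [lin]

lemma lin_zero_one : lin K 0 1 = X := by simp [lin]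

lemma H_CC (H : Rxy K →ₐ[K] Rxy K) (a : K) : H (C (C a)) = C (C a) := by
  have h : (C (C a) : Rxy K) = algebraMap K (Rxy K) a := by
    rw [Polynomial.algebraMap_apply, Polynomial.algebraMap_apply]
    rfl
  rw [h, AlgHom.commutes]

lemma H_lin (H : Rxy K →ₐ[K] Rxy K) (a b : K) :
    H (lin K a b) = C (C a) * H (C X) + C (C b) * H X := by
  have e : lin K a b = C (C a) * C X + C (C b) * X := by rw [lin, ← map_mul]
  rw [e, map_add, map_mul, map_mul, H_CC, H_CC]

section Chg

variable (lam μ α β : ℤ)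

/-- The forward substitution hom: `x ↦ βx - αy`, `y ↦ λx + μy`. -/
def ΦH : Rxy K →ₐ[K] Rxy K :=
  aevalTower (Polynomial.aeval (lin K ((β : ℤ) : K) ((-α : ℤ) : K))) (lin K ((lam : ℤ) : K) ((μ : ℤ) : K))

/-- The backward substitution hom: `x ↦ μx + αy`, `y ↦ -λx + βy`. -/
def ΨH : Rxy K →ₐ[K] Rxy K :=
  aevalTower (Polynomial.aeval (lin K ((μ : ℤ) : K) ((α : ℤ) : K))) (lin K ((-lam : ℤ) : K) ((β : ℤ) : K))

lemma ΦH_CX : ΦH K lam μ α β (C X) = lin K ((β : ℤ) : K) ((-α : ℤ) : K) := by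
  rw [ΦH]
  show aevalTower (Polynomial.aeval _) _ (C X) = _
  rw [aevalTower_C, Polynomial.aeval_X]

lemma ΦH_X : ΦH K lam μ α β X = lin K ((lam : ℤ) : K) ((μ : ℤ) : K) := by
  rw [ΦH]; exact aevalTower_X _ _

lemma ΨH_CX : ΨH K lam μ α β (C X) = lin K ((μ : ℤ) : K) ((α : ℤ) : K) := by
  rw [ΨH]
  show aevalTower (Polynomial.aeval _) _ (C X) = _
  rw [aevalTower_C, Polynomial.aeval_X]

lemma ΨH_X : ΨH K lam μ α β X = lin K ((-lam : ℤ) : K) ((β : ℤ) : K) := by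
  rw [ΨH]; exact aevalTower_X _ _

lemma algHomRxy_ext {f g : Rxy K →ₐ[K] Rxy K}
    (h1 : f (C X) = g (C X)) (h2 : f X = g X) : f = g := by
  apply Polynomial.algHom_ext'
  · apply Polynomial.algHom_ext
    exact h1
  · exact h2

variable (hbez : α * lam + β * μ = 1)
include hbez

lemma ΨΦ (r : Rxy K) : ΨH K lam μ α β (ΦH K lam μ α β r) = r := by
  have hbK : ((β : ℤ) : K) * ((μ : ℤ) : K) + ((-α : ℤ) : K) * ((-lam : ℤ) : K) = 1 := by
    push_cast
    have : ((α : K) * (lam : K) + (β : K) * (μ : K)) = ((1 : ℤ) : K) := by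
      exact_mod_cast congrArg (fun n : ℤ => (n : K)) hbez
    push_cast at this
    linear_combination this
  have h : (ΨH K lam μ α β).comp (ΦH K lam μ α β) = AlgHom.id K (Rxy K) := by
    apply algHomRxy_ext
    · show ΨH K lam μ α β (ΦH K lam μ α β (C X)) = C X
      rw [ΦH_CX, H_lin, ΨH_CX, ΨH_X, lin_comb]
      rw [show ((β : ℤ) : K) * ((μ : ℤ) : K) + ((-α : ℤ) : K) * ((-lam : ℤ) : K) = 1 from hbK]
      rw [show ((β : ℤ) : K) * ((α : ℤ) : K) + ((-α : ℤ) : K) * ((β : ℤ) : K) = 0 by push_cast; ring]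
      rw [lin_one_zero]
    · show ΨH K lam μ α β (ΦH K lam μ α β X) = X
      rw [ΦH_X, H_lin, ΨH_CX, ΨH_X, lin_comb]
      rw [show ((lam : ℤ) : K) * ((μ : ℤ) : K) + ((μ : ℤ) : K) * ((-lam : ℤ) : K) = 0 by push_cast; ring]
      rw [show ((lam : ℤ) : K) * ((α : ℤ) : K) + ((μ : ℤ) : K) * ((β : ℤ) : K) = 1 by
        push_cast
        have : ((α : K) * (lam : K) + (β : K) * (μ : K)) = ((1 : ℤ) : K) := by
          exact_mod_cast congrArg (fun n : ℤ => (n : K)) hbez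
        push_cast at this
        linear_combination this]
      rw [lin_zero_one]
  exact AlgHom.congr_fun h r

lemma ΦΨ (r : Rxy K) : ΦH K lam μ α β (ΨH K lam μ α β r) = r := by
  have h : (ΦH K lam μ α β).comp (ΨH K lam μ α β) = AlgHom.id K (Rxy K) := by
    apply algHomRxy_ext
    · show ΦH K lam μ α β (ΨH K lam μ α β (C X)) = C X
      rw [ΨH_CX, H_lin, ΦH_CX, ΦH_X, lin_comb]
      rw [show ((μ : ℤ) : K) * ((β : ℤ) : K) + ((α : ℤ) : K) * ((lam : ℤ) : K) = 1 by
        push_cast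
        have : ((α : K) * (lam : K) + (β : K) * (μ : K)) = ((1 : ℤ) : K) := by
          exact_mod_cast congrArg (fun n : ℤ => (n : K)) hbez
        push_cast at this
        linear_combination this]
      rw [show ((μ : ℤ) : K) * ((-α : ℤ) : K) + ((α : ℤ) : K) * ((μ : ℤ) : K) = 0 by push_cast; ring]
      rw [lin_one_zero]
    · show ΦH K lam μ α β (ΨH K lam μ α β X) = X
      rw [ΨH_X, H_lin, ΦH_CX, ΦH_X, lin_comb]
      rw [show ((-lam : ℤ) : K) * ((β : ℤ) : K) + ((β : ℤ) : K) * ((lam : ℤ) : K) = 0 by push_cast; ring]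
      rw [show ((-lam : ℤ) : K) * ((-α : ℤ) : K) + ((β : ℤ) : K) * ((μ : ℤ) : K) = 1 by
        push_cast
        have : ((α : K) * (lam : K) + (β : K) * (μ : K)) = ((1 : ℤ) : K) := by
          exact_mod_cast congrArg (fun n : ℤ => (n : K)) hbez
        push_cast at this
        linear_combination this]
      rw [lin_zero_one]
  exact AlgHom.congr_fun h r

end Chg

end
section


variable (K : Type*) [Field K] [CharZero K]

lemma zpow_family {B : Type*} [Semiring B] (s : RingAut B) (F : ℤ → B) (t : ℤ)
    (h : ∀ c, s (F c) = F (c + t)) : ∀ (n : ℤ) (c : ℤ), (s ^ n) (F c) = F (c + n * t) := by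
  have hinv : ∀ c, s⁻¹ (F c) = F (c - t) := by
    intro c
    have h2 : s (F (c - t)) = F c := by rw [h, sub_add_cancel]
    rw [← h2, aut_cancel]
  have hnat : ∀ (n : ℕ) (c : ℤ), (s ^ n) (F c) = F (c + n * t) := by
    intro n
    induction n with
    | zero => intro c; show F c = _; rw [show c + (0 : ℕ) * t = c by push_cast; ring]
    | succ n ih =>
        intro c
        rw [pow_succ, aut_mul_apply, h, ih]
        congr 1
        push_cast; ring
  have hinvnat : ∀ (n : ℕ) (c : ℤ), ((s ^ n)⁻¹) (F c) = F (c - n * t) := by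
    intro n
    induction n with
    | zero => intro c; show F c = _; rw [show c - (0 : ℕ) * t = c by push_cast; ring]
    | succ n ih =>
        intro c
        have e : (s ^ (n + 1))⁻¹ = (s ^ n)⁻¹ * s⁻¹ := by
          rw [← mul_inv_rev, ← pow_succ']
        rw [e, aut_mul_apply, hinv, ih]
        congr 1
        push_cast; ring
  intro n c
  cases n with
  | ofNat m =>
      rw [Int.ofNat_eq_coe, zpow_natCast, hnat]
  | negSucc m =>
      rw [zpow_negSucc, hinvnat]
      congr 1
      rw [Int.negSucc_eq]; push_cast; ring

section QP

variable (lam μ α β : ℤ) (p : Polynomial K)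

/-- The polynomial `λx + μy + c ∈ K[x][y]`. -/
def zcR (c : ℤ) : Rxy K := lin K ((lam : ℤ) : K) ((μ : ℤ) : K) + C (C ((c : ℤ) : K))

/-- The polynomial `p(λx + μy + c) ∈ K[x][y]`. -/
def qp (c : ℤ) : Rxy K := Polynomial.aeval (zcR K lam μ c) p

/-- The shifted polynomial `p(Y + c) ∈ K[Y]`. -/
def ps (c : ℤ) : Polynomial K := p.comp (X + C ((c : ℤ) : K))

lemma ps_monic (hp : p.Monic) (c : ℤ) : (ps K p c).Monic := hp.comp_X_add_C _

lemma ps_irred (hpirr : Irreducible p) (c : ℤ) : Irreducible (ps K p c) := by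
  have hcomp : ps K p c = (Polynomial.aeval (X + C ((c : ℤ) : K)) :
      Polynomial K →ₐ[K] Polynomial K) p := by
    rw [ps, comp_eq_aeval]
  rw [hcomp]
  have h1 : ∀ a : Polynomial K,
      (Polynomial.aeval (X - C ((c : ℤ) : K))) ((Polynomial.aeval (X + C ((c : ℤ) : K))) a) = a := by
    intro a
    have h : ((Polynomial.aeval (X - C ((c : ℤ) : K)) :
        Polynomial K →ₐ[K] Polynomial K).comp (Polynomial.aeval (X + C ((c : ℤ) : K)))) =
        AlgHom.id K (Polynomial K) := by
      apply Polynomial.algHom_ext; simp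
    exact AlgHom.congr_fun h a
  have h2 : ∀ a : Polynomial K,
      (Polynomial.aeval (X + C ((c : ℤ) : K))) ((Polynomial.aeval (X - C ((c : ℤ) : K))) a) = a := by
    intro a
    have h : ((Polynomial.aeval (X + C ((c : ℤ) : K)) :
        Polynomial K →ₐ[K] Polynomial K).comp (Polynomial.aeval (X - C ((c : ℤ) : K)))) =
        AlgHom.id K (Polynomial K) := by
      apply Polynomial.algHom_ext; simp
    exact AlgHom.congr_fun h a
  exact irreducible_of_homs (Polynomial.aeval (X + C ((c : ℤ) : K)) :
      Polynomial K →ₐ[K] Polynomial K).toRingHom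
    (Polynomial.aeval (X - C ((c : ℤ) : K))).toRingHom h1 h2 hpirr

lemma H_mapC (H : Rxy K →ₐ[K] Rxy K) (w : Polynomial K) :
    H (w.map (C : K →+* Polynomial K)) = Polynomial.aeval (H X) w := by
  have h : (H.toRingHom.comp (Polynomial.mapRingHom (C : K →+* Polynomial K)))
      = (Polynomial.aeval (H X) : Polynomial K →ₐ[K] Rxy K).toRingHom := by
    apply Polynomial.ringHom_ext
    · intro a
      show H ((C a : Polynomial K).map (C : K →+* Polynomial K)) = Polynomial.aeval (H X) (C a)
      rw [Polynomial.map_C, H_CC, Polynomial.aeval_C]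
      rfl
    · show H ((X : Polynomial K).map (C : K →+* Polynomial K)) = Polynomial.aeval (H X) X
      rw [Polynomial.map_X, Polynomial.aeval_X]
  exact RingHom.congr_fun h w

lemma qp_eq_Φ (c : ℤ) :
    qp K lam μ p c = ΦH K lam μ α β ((ps K p c).map (C : K →+* Polynomial K)) := by
  rw [H_mapC, ps, Polynomial.aeval_comp]
  rw [qp]
  congr 1
  rw [map_add, Polynomial.aeval_X, Polynomial.aeval_C, ΦH_X, zcR]
  rfl

lemma qp_irred (hbez : α * lam + β * μ = 1) (hp : p.Monic) (hpirr : Irreducible p) (c : ℤ) :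
    Irreducible (qp K lam μ p c) := by
  rw [qp_eq_Φ K lam μ α β]
  exact irreducible_of_homs (ΦH K lam μ α β).toRingHom (ΨH K lam μ α β).toRingHom
    (ΨΦ K lam μ α β hbez) (ΦΨ K lam μ α β hbez)
    (irreducible_mapC K (ps_irred K p hpirr c) (ps_monic K p hp c))

lemma zcR_linear (c : ℤ) :
    zcR K lam μ c = C (C ((μ : ℤ) : K)) * X + C (C ((lam : ℤ) : K) * X + C ((c : ℤ) : K)) := by
  rw [zcR, lin, map_add]
  ring

lemma zcR_natDegree (hμ : 0 < μ) (c : ℤ) : (zcR K lam μ c).natDegree = 1 := by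
  rw [zcR_linear]
  exact natDegree_linear (by
    intro h
    rw [← map_zero (C : K →+* Polynomial K)] at h
    have := C_injective h
    have hμ0 : ((μ : ℤ) : K) ≠ 0 := Int.cast_ne_zero.mpr (by omega)
    exact hμ0 this)

lemma zcR_leadingCoeff (hμ : 0 < μ) (c : ℤ) :
    (zcR K lam μ c).leadingCoeff = C ((μ : ℤ) : K) := by
  rw [zcR_linear]
  exact leadingCoeff_linear (by
    intro h
    rw [← map_zero (C : K →+* Polynomial K)] at h
    have := C_injective h
    have hμ0 : ((μ : ℤ) : K) ≠ 0 := Int.cast_ne_zero.mpr (by omega)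
    exact hμ0 this)

lemma qp_eq_sum (c : ℤ) :
    qp K lam μ p c = ∑ i ∈ Finset.range (p.natDegree + 1),
      C (C (p.coeff i)) * (zcR K lam μ c) ^ i := by
  rw [qp, Polynomial.aeval_def, Polynomial.eval₂_eq_sum_range]
  apply Finset.sum_congr rfl
  intro i _
  congr 1

lemma qp_coeff_d (hμ : 0 < μ) (hp : p.Monic) (c : ℤ) :
    (qp K lam μ p c).coeff p.natDegree = C ((μ : ℤ) : K) ^ p.natDegree := by
  rw [qp_eq_sum, finset_sum_coeff, Finset.sum_range_succ]
  have hz : ∀ i < p.natDegree,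
      (C (C (p.coeff i)) * (zcR K lam μ c) ^ i).coeff p.natDegree = 0 := by
    intro i hi
    have hzero : ((zcR K lam μ c) ^ i).coeff p.natDegree = 0 := by
      apply coeff_eq_zero_of_natDegree_lt
      calc ((zcR K lam μ c) ^ i).natDegree ≤ i * (zcR K lam μ c).natDegree :=
            natDegree_pow_le
        _ ≤ i * 1 := by rw [zcR_natDegree K lam μ hμ c]
        _ < p.natDegree := by omega
    rw [coeff_C_mul, hzero, mul_zero]
  rw [Finset.sum_eq_zero (fun i hi => hz i (Finset.mem_range.mp hi)), zero_add]
  rw [coeff_C_mul]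
  have hd : ((zcR K lam μ c) ^ p.natDegree).coeff p.natDegree
      = (zcR K lam μ c).leadingCoeff ^ p.natDegree := by
    have := coeff_pow_mul_natDegree (zcR K lam μ c) p.natDegree
    rwa [zcR_natDegree K lam μ hμ c, mul_one] at this
  rw [hd, zcR_leadingCoeff K lam μ hμ c, hp.coeff_natDegree, map_one, one_mul]

lemma qp_natDegree (hμ : 0 < μ) (hp : p.Monic) (c : ℤ) :
    (qp K lam μ p c).natDegree = p.natDegree := by
  apply le_antisymm
  · rw [qp_eq_sum]
    apply natDegree_sum_le_of_forall_le
    intro i hi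
    calc (C (C (p.coeff i)) * (zcR K lam μ c) ^ i).natDegree
        ≤ (C (C (p.coeff i))).natDegree + ((zcR K lam μ c) ^ i).natDegree :=
          natDegree_mul_le
      _ ≤ 0 + i * (zcR K lam μ c).natDegree := by
          have h1 : (C (C (p.coeff i))).natDegree = 0 := natDegree_C _
          have h2 := natDegree_pow_le (p := zcR K lam μ c) (n := i)
          omega
      _ ≤ p.natDegree := by
          rw [zcR_natDegree K lam μ hμ c]
          have := Finset.mem_range.mp hi
          omega
  · apply le_natDegree_of_ne_zero
    rw [qp_coeff_d K lam μ p hμ hp c]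
    exact pow_ne_zero _ (fun h => by
      rw [← map_zero (C : K →+* Polynomial K)] at h
      exact (Int.cast_ne_zero.mpr (by omega : (μ : ℤ) ≠ 0)) (C_injective h))

lemma qp_ne_zero (hμ : 0 < μ) (hp : p.Monic) (c : ℤ) : qp K lam μ p c ≠ 0 := by
  intro h
  have h2 := qp_coeff_d K lam μ p hμ hp c
  rw [h, coeff_zero] at h2
  exact pow_ne_zero _ (fun h3 => by
    rw [← map_zero (C : K →+* Polynomial K)] at h3
    exact (Int.cast_ne_zero.mpr (by omega : (μ : ℤ) ≠ 0)) (C_injective h3)) h2.symm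

lemma qp_leadingCoeff (hμ : 0 < μ) (hp : p.Monic) (c : ℤ) :
    (qp K lam μ p c).leadingCoeff = C ((μ : ℤ) : K) ^ p.natDegree := by
  rw [leadingCoeff, qp_natDegree K lam μ p hμ hp c, qp_coeff_d K lam μ p hμ hp c]

end QP

end
section


variable (K : Type*) [Field K] [CharZero K]

section QP2

variable (lam μ α β : ℤ) (p : Polynomial K)

lemma qp_prime (hbez : α * lam + β * μ = 1) (hp : p.Monic) (hpirr : Irreducible p) (c : ℤ) :
    Prime (qp K lam μ p c) :=
  (UniqueFactorizationMonoid.irreducible_iff_prime).mp (qp_irred K lam μ α β p hbez hp hpirr c)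

lemma ps_inj (hp : p.Monic) (hpirr : Irreducible p) {c c' : ℤ}
    (h : ps K p c = ps K p c') : c = c' := by
  by_contra hne
  have heval : ∀ t : K, p.eval (t + ((c : ℤ) : K)) = p.eval (t + ((c' : ℤ) : K)) := by
    intro t
    have h1 := congrArg (Polynomial.eval t) h
    rw [ps, ps, Polynomial.eval_comp, Polynomial.eval_comp] at h1
    simpa using h1
  set a : K := ((c : ℤ) : K) - ((c' : ℤ) : K) with ha
  have hane : a ≠ 0 := by
    rw [ha, sub_ne_zero]
    exact fun hcc => hne (Int.cast_injective hcc)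
  have hshift : ∀ s : K, p.eval (s + a) = p.eval s := by
    intro s
    have := heval (s - ((c' : ℤ) : K))
    rw [show s - ((c' : ℤ) : K) + ((c : ℤ) : K) = s + a by rw [ha]; ring,
      show s - ((c' : ℤ) : K) + ((c' : ℤ) : K) = s by ring] at this
    exact this
  have hn : ∀ n : ℕ, p.eval ((n : K) * a) = p.eval 0 := by
    intro n
    induction n with
    | zero => simp
    | succ n ih =>
        rw [show ((n + 1 : ℕ) : K) * a = (n : K) * a + a by push_cast; ring, hshift, ih]
  have hroots : {x : K | (p - C (p.eval 0)).IsRoot x}.Infinite := by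
    apply Set.infinite_of_injective_forall_mem
      (f := fun n : ℕ => (n : K) * a)
    · intro n m hnm
      have h5 : (n : K) * a = (m : K) * a := hnm
      have := mul_right_cancel₀ hane h5
      exact_mod_cast this
    · intro n
      show (p - C (p.eval 0)).IsRoot _
      rw [Polynomial.IsRoot, Polynomial.eval_sub, Polynomial.eval_C, hn n, sub_self]
  have hzero := Polynomial.eq_zero_of_infinite_isRoot _ hroots
  have hpc : p = C (p.eval 0) := by
    have := sub_eq_zero.mp hzero
    exact this
  have hdeg : p.natDegree = 0 := by rw [hpc]; exact natDegree_C _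
  have hone : p = 1 := (hp.natDegree_eq_zero).mp hdeg
  exact hpirr.not_isUnit (hone ▸ isUnit_one)

lemma qp_inj (hbez : α * lam + β * μ = 1) (hp : p.Monic) (hpirr : Irreducible p) {c c' : ℤ}
    (h : qp K lam μ p c = qp K lam μ p c') : c = c' := by
  apply ps_inj K p hp hpirr
  rw [qp_eq_Φ K lam μ α β, qp_eq_Φ K lam μ α β] at h
  have hΦinj : Function.Injective (ΦH K lam μ α β) := by
    intro x y hxy
    have := congrArg (ΨH K lam μ α β) hxy
    rwa [ΨΦ K lam μ α β hbez, ΨΦ K lam μ α β hbez] at this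
  have hmap := hΦinj h
  exact Polynomial.map_injective _ C_injective hmap

lemma qp_assoc_inj (hμ : 0 < μ) (hbez : α * lam + β * μ = 1) (hp : p.Monic)
    (hpirr : Irreducible p) {c c' : ℤ}
    (h : Associated (qp K lam μ p c) (qp K lam μ p c')) : c = c' := by
  obtain ⟨u, hu⟩ := h
  have huu : IsUnit (u : Rxy K) := u.isUnit
  obtain ⟨w, hw, hCw⟩ := Polynomial.isUnit_iff.mp huu
  obtain ⟨r, hr, hCr⟩ := Polynomial.isUnit_iff.mp hw
  have hlc : (qp K lam μ p c).leadingCoeff * C r = (qp K lam μ p c').leadingCoeff := by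
    rw [← hu, Polynomial.leadingCoeff_mul, ← hCw, ← hCr, Polynomial.leadingCoeff_C]
  rw [qp_leadingCoeff K lam μ p hμ hp c, qp_leadingCoeff K lam μ p hμ hp c'] at hlc
  have hκ : (C ((μ : ℤ) : K) : Polynomial K) ^ p.natDegree ≠ 0 :=
    pow_ne_zero _ (fun h3 => by
      rw [← map_zero (C : K →+* Polynomial K)] at h3
      exact (Int.cast_ne_zero.mpr (by omega : (μ : ℤ) ≠ 0)) (C_injective h3))
  have hCr1 : (C r : Polynomial K) = 1 := by
    have : (C ((μ : ℤ) : K) : Polynomial K) ^ p.natDegree * C r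
        = C ((μ : ℤ) : K) ^ p.natDegree * 1 := by rw [mul_one, hlc]
    exact mul_left_cancel₀ hκ this
  have hueq : (u : Rxy K) = 1 := by rw [← hCw, ← hCr, hCr1, map_one]
  rw [hueq, mul_one] at hu
  exact qp_inj K lam μ α β p hbez hp hpirr hu

lemma σyR_zcR (c : ℤ) : σyR K (zcR K lam μ c) = zcR K lam μ (c + μ) := by
  have h2 : σyR K (C (C ((μ : ℤ) : K)) * X) = C (C ((μ : ℤ) : K)) * (X + 1) := by
    rw [map_mul, σyR_C, σyR_X]
  have h1 : σyR K (zcR K lam μ c)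
      = C (C ((lam : ℤ) : K) * X) + C (C ((μ : ℤ) : K)) * (X + 1) + C (C ((c : ℤ) : K)) := by
    rw [zcR, lin, map_add, map_add, σyR_C, h2, σyR_C]
  rw [h1, zcR, lin]
  have hc : (C (C ((c + μ : ℤ) : K)) : Rxy K) = C (C ((c : ℤ) : K)) + C (C ((μ : ℤ) : K)) := by
    rw [show ((c + μ : ℤ) : K) = ((c : ℤ) : K) + ((μ : ℤ) : K) by push_cast; ring, map_add, map_add]
  rw [hc]
  ring

lemma σyR_algebraMap (a : K) : σyR K (algebraMap K (Rxy K) a) = algebraMap K (Rxy K) a := by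
  have h : algebraMap K (Rxy K) a = C (C a) := by
    rw [Polynomial.algebraMap_apply, Polynomial.algebraMap_apply]; rfl
  rw [h, σyR_C]

lemma σyR_qp (c : ℤ) : σyR K (qp K lam μ p c) = qp K lam μ p (c + μ) := by
  rw [qp, qp, Polynomial.aeval_def, Polynomial.aeval_def]
  have h := Polynomial.hom_eval₂ p (algebraMap K (Rxy K)) ((σyR K) : Rxy K →+* Rxy K)
    (zcR K lam μ c)
  have hcomp : (((σyR K) : Rxy K →+* Rxy K).comp (algebraMap K (Rxy K)))
      = algebraMap K (Rxy K) := RingHom.ext fun a => σyR_algebraMap K a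
  have h2 : eval₂ ((((σyR K) : Rxy K →+* Rxy K)).comp (algebraMap K (Rxy K)))
      (((σyR K) : Rxy K →+* Rxy K) (zcR K lam μ c)) p
      = eval₂ (algebraMap K (Rxy K)) (zcR K lam μ (c + μ)) p := by
    rw [hcomp]
    congr 1
    exact σyR_zcR K lam μ c
  exact h.trans h2

lemma σyR_zpow_qp (m c : ℤ) : (σyR K ^ m) (qp K lam μ p c) = qp K lam μ p (c + m * μ) := by
  have := zpow_family (σyR K) (fun c => qp K lam μ p c) μ (fun c => σyR_qp K lam μ p c) m c
  exact this

lemma ι₀_algebraMap (a : K) : ι₀ K (algebraMap K (Rxy K) a) = ιK K a := by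
  have h : algebraMap K (Rxy K) a = C (C a) := by
    rw [Polynomial.algebraMap_apply, Polynomial.algebraMap_apply]; rfl
  rw [h]; rfl

lemma ι₀_zcR (c : ℤ) : ι₀ K (zcR K lam μ c) = zF K lam μ + (c : Fxy K) := by
  rw [zcR, lin, map_add, map_add]
  have h1 : ι₀ K (C (C ((lam : ℤ) : K) * X)) = (lam : Fxy K) * xF K := by
    show ιx₀ K (C ((lam : ℤ) : K) * X) = _
    rw [map_mul]
    have hιl : ιx₀ K (C ((lam : ℤ) : K)) = (lam : Fxy K) := by
      show ιK K ((lam : ℤ) : K) = _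
      exact map_intCast (ιK K) lam
    rw [hιl]; rfl
  have h2 : ι₀ K (C (C ((μ : ℤ) : K)) * X) = (μ : Fxy K) * yF K := by
    rw [map_mul]
    have hιμ : ι₀ K (C (C ((μ : ℤ) : K))) = (μ : Fxy K) := by
      show ιK K ((μ : ℤ) : K) = _
      exact map_intCast (ιK K) μ
    rw [hιμ]; rfl
  have h3 : ι₀ K (C (C ((c : ℤ) : K))) = (c : Fxy K) := by
    show ιK K ((c : ℤ) : K) = _
    exact map_intCast (ιK K) c
  rw [h1, h2, h3, zF]

lemma ι₀_qp (c : ℤ) :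
    ι₀ K (qp K lam μ p c) = Polynomial.eval₂ (ιK K) (zF K lam μ + (c : Fxy K)) p := by
  rw [qp, Polynomial.aeval_def]
  have h := Polynomial.hom_eval₂ p (algebraMap K (Rxy K)) (ι₀ K) (zcR K lam μ c)
  rw [h]
  have hcomp : ((ι₀ K).comp (algebraMap K (Rxy K))) = ιK K :=
    RingHom.ext fun a => ι₀_algebraMap K a
  rw [hcomp, ι₀_zcR]

lemma Gq_eq_qp (k : ℕ) (c : ℤ) :
    Gq K lam μ p k c = ((ι₀ K (qp K lam μ p c)) ^ k)⁻¹ := by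
  rw [Gq, ι₀_qp]

lemma ι₀_qp_ne_zero (hμ : 0 < μ) (hp : p.Monic) (c : ℤ) : ι₀ K (qp K lam μ p c) ≠ 0 := by
  intro h
  have := (map_eq_zero_iff (ι₀ K)
    (IsFractionRing.injective (Rxy K) (Fxy K))).mp h
  exact qp_ne_zero K lam μ p hμ hp c this

/-- `qp c` does not divide a nonzero polynomial of smaller `y`-degree. -/
lemma qp_not_dvd (hμ : 0 < μ) (hp : p.Monic) {a : Rxy K} (ha : a ≠ 0)
    (hdeg : a.degree < p.degree) (c : ℤ) : ¬ qp K lam μ p c ∣ a := by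
  intro hdvd
  have h1 : (qp K lam μ p c).natDegree ≤ a.natDegree := natDegree_le_of_dvd hdvd ha
  rw [qp_natDegree K lam μ p hμ hp c] at h1
  have h2 : a.natDegree < p.natDegree := by
    apply natDegree_lt_natDegree ha hdeg
  omega

/-- `qp c` does not divide a nonzero element of `K[x]` (as a constant of `K[x][y]`). -/
lemma qp_not_dvd_C (hμ : 0 < μ) (hp : p.Monic) (hpirr : Irreducible p)
    {u : Polynomial K} (hu : u ≠ 0) (c : ℤ) : ¬ qp K lam μ p c ∣ (C u : Rxy K) := by
  intro hdvd
  have h1 : (qp K lam μ p c).natDegree ≤ (C u : Rxy K).natDegree :=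
    natDegree_le_of_dvd hdvd (by
      intro h
      exact hu ((map_eq_zero_iff (C : Polynomial K →+* Rxy K) C_injective).mp h))
  rw [qp_natDegree K lam μ p hμ hp c, natDegree_C] at h1
  have hd1 : 0 < p.natDegree := by
    rcases Nat.eq_zero_or_pos p.natDegree with h | h
    · exact absurd ((hp.natDegree_eq_zero).mp h ▸ isUnit_one) hpirr.not_isUnit
    · exact h
  omega

end QP2

end
section


variable (K : Type*) [Field K] [CharZero K]

/-- `h` has no pole at the prime `q` of `K[x][y]`. -/
def noPole (q : Rxy K) (h : Fxy K) : Prop :=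
  ∃ a b : Rxy K, ¬ q ∣ b ∧ h = ι₀ K a / ι₀ K b

lemma noPole_of_rep {q : Rxy K} (a b : Rxy K) (hb : ¬ q ∣ b) :
    noPole K q (ι₀ K a / ι₀ K b) := ⟨a, b, hb, rfl⟩

lemma noPole_zero {q : Rxy K} (hq : Prime q) : noPole K q 0 :=
  ⟨0, 1, fun h => hq.not_isUnit (isUnit_of_dvd_one h), by simp⟩

lemma b_ne_zero {q b : Rxy K} (hb : ¬ q ∣ b) : b ≠ 0 := fun h => hb (h ▸ dvd_zero q)

lemma ι₀_ne_zero {b : Rxy K} (hb : b ≠ 0) : ι₀ K b ≠ 0 := fun h =>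
  hb ((map_eq_zero_iff (ι₀ K) (IsFractionRing.injective (Rxy K) (Fxy K))).mp h)

lemma noPole_add {q : Rxy K} (hq : Prime q) {f g : Fxy K}
    (hf : noPole K q f) (hg : noPole K q g) : noPole K q (f + g) := by
  obtain ⟨a, b, hb, rfl⟩ := hf
  obtain ⟨a', b', hb', rfl⟩ := hg
  have hbne := ι₀_ne_zero K (b_ne_zero K hb)
  have hbne' := ι₀_ne_zero K (b_ne_zero K hb')
  refine ⟨a * b' + b * a', b * b', fun h => ?_, ?_⟩
  · rcases hq.dvd_mul.mp h with h | h
    · exact hb h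
    · exact hb' h
  · rw [div_add_div _ _ hbne hbne', map_add, map_mul, map_mul, map_mul]

lemma noPole_neg {q : Rxy K} {f : Fxy K} (hf : noPole K q f) : noPole K q (-f) := by
  obtain ⟨a, b, hb, rfl⟩ := hf
  exact ⟨-a, b, hb, by rw [map_neg, neg_div]⟩

lemma noPole_sub {q : Rxy K} (hq : Prime q) {f g : Fxy K}
    (hf : noPole K q f) (hg : noPole K q g) : noPole K q (f - g) := by
  rw [sub_eq_add_neg]
  exact noPole_add K hq hf (noPole_neg K hg)

lemma noPole_sum {q : Rxy K} (hq : Prime q) {s : Finset ℕ} {F : ℕ → Fxy K}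
    (h : ∀ j ∈ s, noPole K q (F j)) : noPole K q (∑ j ∈ s, F j) := by
  classical
  induction s using Finset.induction_on with
  | empty => simpa using noPole_zero K hq
  | insert a s' hnot ih =>
      rw [Finset.sum_insert hnot]
      exact noPole_add K hq (h a (Finset.mem_insert_self a s'))
        (ih fun j hj => h j (Finset.mem_insert_of_mem hj))

lemma noPole_equiv {q : Rxy K} {h : Fxy K} (e : RingAut (Rxy K)) (eF : RingAut (Fxy K))
    (hcompat : ∀ a, eF (ι₀ K a) = ι₀ K (e a)) (hnp : noPole K q h) :
    noPole K (e q) (eF h) := by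
  obtain ⟨a, b, hb, rfl⟩ := hnp
  refine ⟨e a, e b, fun hdvd => hb ?_, ?_⟩
  · obtain ⟨t, ht⟩ := hdvd
    refine ⟨(e⁻¹ : RingAut (Rxy K)) t, ?_⟩
    have h5 : (e⁻¹ : RingAut (Rxy K)) (e b) = (e⁻¹ : RingAut (Rxy K)) (e q * t) := by rw [ht]
    rw [map_mul, aut_cancel, aut_cancel] at h5
    exact h5
  · rw [map_div₀]
    show eF (ι₀ K a) / eF (ι₀ K b) = _
    rw [hcompat, hcompat]

lemma σyF_zpow_ι (s : ℤ) (a : Rxy K) :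
    (σyF K ^ s) (ι₀ K a) = ι₀ K ((σyR K ^ s) a) :=
  compat_zpow (ι₀ K) (σyR K) (σyF K) (σyF_ι K) s a

lemma σxF_zpow_ι (s : ℤ) (a : Rxy K) :
    (σxF K ^ s) (ι₀ K a) = ι₀ K ((σxR K ^ s) a) :=
  compat_zpow (ι₀ K) (σxR K) (σxF K) (σxF_ι K) s a

lemma noPole_σ_zpow {q : Rxy K} {h : Fxy K} (s : ℤ) (hnp : noPole K q h) :
    noPole K ((σyR K ^ s) q) ((σyF K ^ s) h) :=
  noPole_equiv K (σyR K ^ s) (σyF K ^ s) (σyF_zpow_ι K s) hnp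

section Key

variable (lam μ α β : ℤ) (p : Polynomial K) (k : ℕ)

lemma div_mul_inv' (A B C : Fxy K) : A / B * C⁻¹ = A / (B * C) := by
  rw [div_eq_mul_inv, mul_assoc, ← mul_inv, ← div_eq_mul_inv]

/-- A term `(a/u) * 1/p(z+r)^k` written with a single denominator. -/
lemma term_rep (a : Rxy K) (u : Polynomial K) (r : ℤ) :
    ι₀ K a / ιx₀ K u * Gq K lam μ p k r
      = ι₀ K a / ι₀ K (C u * qp K lam μ p r ^ k) := by
  rw [Gq_eq_qp, ιx₀_eq, div_mul_inv', ← map_pow, ← map_mul]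

/-- A term `c * 1/p(z+r)^k` has no pole at `qp c'` if `c' ≠ r`. -/
lemma noPole_term (hμ : 0 < μ) (hbez : α * lam + β * μ = 1) (hp : p.Monic)
    (hpirr : Irreducible p) {c' r : ℤ} (hne : c' ≠ r)
    (a : Rxy K) {u : Polynomial K} (hu : u ≠ 0) :
    noPole K (qp K lam μ p c') (ι₀ K a / ιx₀ K u * Gq K lam μ p k r) := by
  have hq' := qp_prime K lam μ α β p hbez hp hpirr c'
  rw [term_rep]
  apply noPole_of_rep
  intro hdvd
  rcases hq'.dvd_mul.mp hdvd with h | h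
  · exact qp_not_dvd_C K lam μ p hμ hp hpirr hu c' h
  · have h2 := hq'.dvd_of_dvd_pow h
    have hassoc := (qp_irred K lam μ α β p hbez hp hpirr c').associated_of_dvd
      (qp_irred K lam μ α β p hbez hp hpirr r) h2
    exact hne (qp_assoc_inj K lam μ α β p hμ hbez hp hpirr hassoc)

/-- A nonzero proper term `(a/u) * 1/p(z+r)^k` *does* have a pole at `qp r`. -/
lemma pole_term (hμ : 0 < μ) (hbez : α * lam + β * μ = 1) (hp : p.Monic)
    (hpirr : Irreducible p) (hk : 0 < k) {r : ℤ}
    {a : Rxy K} (ha : a ≠ 0) (hadeg : a.degree < p.degree)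
    {u : Polynomial K} (hu : u ≠ 0) :
    ¬ noPole K (qp K lam μ p r) (ι₀ K a / ιx₀ K u * Gq K lam μ p k r) := by
  have hq := qp_prime K lam μ α β p hbez hp hpirr r
  rw [term_rep]
  rintro ⟨a', b', hb', heq⟩
  have hden : (C u * qp K lam μ p r ^ k : Rxy K) ≠ 0 := by
    apply mul_ne_zero
    · intro h
      exact hu ((map_eq_zero_iff (C : Polynomial K →+* Rxy K) C_injective).mp h)
    · exact pow_ne_zero _ (qp_ne_zero K lam μ p hμ hp r)
  have hb'0 : b' ≠ 0 := b_ne_zero K hb'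
  have hcross : a * b' = a' * (C u * qp K lam μ p r ^ k) := by
    have h1 := (div_eq_div_iff (ι₀_ne_zero K hden) (ι₀_ne_zero K hb'0)).mp heq
    rw [← map_mul, ← map_mul] at h1
    exact IsFractionRing.injective (Rxy K) (Fxy K) h1
  have hdvd : qp K lam μ p r ∣ a * b' := by
    rw [hcross]
    exact Dvd.dvd.mul_left (Dvd.dvd.mul_left (dvd_pow_self _ hk.ne') _) _
  rcases hq.dvd_mul.mp hdvd with h | h
  · exact qp_not_dvd K lam μ p hμ hp ha hadeg r h
  · exact hb' h

/-- **Key vanishing lemma**: if `∑_{r<μ} c_r/p(z+r)^k` is `σ_y`-summable with the `c_r`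
proper (`deg_y < deg p`), then each `c_r` vanishes. -/
lemma keyVanish (hμ : 0 < μ) (hbez : α * lam + β * μ = 1) (hp : p.Monic)
    (hpirr : Irreducible p) (hk : 0 < k) (cf : ℤ → Fxy K)
    (hrep : ∀ r : ℤ, ∃ (a : Rxy K) (u : Polynomial K), u ≠ 0 ∧
      cf r = ι₀ K a / ιx₀ K u ∧ a.degree < p.degree)
    (hsumm : IsSummableY K (∑ r ∈ Finset.range μ.toNat,
      cf (r : ℤ) * Gq K lam μ p k (r : ℤ)))
    {r0 : ℤ} (hr0 : 0 ≤ r0) (hr1 : r0 < μ) : cf r0 = 0 := by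
  classical
  by_contra hne
  set w : Fxy K := ∑ r ∈ Finset.range μ.toNat, cf (r : ℤ) * Gq K lam μ p k (r : ℤ) with hw
  -- Step A: w has no pole at qp c' for c' outside [0, μ)
  have stepA : ∀ c' : ℤ, (∀ r ∈ Finset.range μ.toNat, c' ≠ (r : ℤ)) →
      noPole K (qp K lam μ p c') w := by
    intro c' hc'
    apply noPole_sum K (qp_prime K lam μ α β p hbez hp hpirr c')
    intro r hr
    obtain ⟨a, u, hu, hcr, _⟩ := hrep (r : ℤ)
    rw [hcr]
    exact noPole_term K lam μ α β p k hμ hbez hp hpirr (hc' r hr) a hu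
  -- Step B: w has a pole at qp r0
  have hr0mem : r0.toNat ∈ Finset.range μ.toNat := by
    rw [Finset.mem_range]; omega
  have hr0cast : ((r0.toNat : ℕ) : ℤ) = r0 := by omega
  have stepB : ¬ noPole K (qp K lam μ p r0) w := by
    intro hnp
    have hrest : noPole K (qp K lam μ p r0)
        (∑ r ∈ (Finset.range μ.toNat).erase r0.toNat,
          cf (r : ℤ) * Gq K lam μ p k (r : ℤ)) := by
      apply noPole_sum K (qp_prime K lam μ α β p hbez hp hpirr r0)
      intro r hr
      obtain ⟨a, u, hu, hcr, _⟩ := hrep (r : ℤ)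
      rw [hcr]
      apply noPole_term K lam μ α β p k hμ hbez hp hpirr _ a hu
      intro hEq
      apply (Finset.mem_erase.mp hr).1
      omega
    have hterm : noPole K (qp K lam μ p r0) (cf r0 * Gq K lam μ p k r0) := by
      have hsplit : cf r0 * Gq K lam μ p k r0
          = w - ∑ r ∈ (Finset.range μ.toNat).erase r0.toNat,
              cf (r : ℤ) * Gq K lam μ p k (r : ℤ) := by
        rw [hw]
        rw [← Finset.sum_erase_add (Finset.range μ.toNat) _ hr0mem, hr0cast]
        ring
      rw [hsplit]
      exact noPole_sub K (qp_prime K lam μ α β p hbez hp hpirr r0) hnp hrest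
    obtain ⟨a, u, hu, hcr, hdeg⟩ := hrep r0
    have ha : a ≠ 0 := by
      intro h0
      apply hne
      rw [hcr, h0, map_zero, zero_div]
    rw [hcr] at hterm
    exact pole_term K lam μ α β p k hμ hbez hp hpirr hk ha hdeg hu hterm
  -- Step C
  obtain ⟨h, hh⟩ := hsumm
  obtain ⟨ah, bh, hbhmem, hhab⟩ := IsFractionRing.div_surjective (A := Rxy K) h
  have hbh0 : bh ≠ 0 := nonZeroDivisors.ne_zero hbhmem
  have hQ : ∀ m : ℤ, (σyR K ^ m) (qp K lam μ p r0) = qp K lam μ p (r0 + m * μ) :=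
    fun m => σyR_zpow_qp K lam μ p m r0
  -- the pole set of h along the orbit
  set S : Set ℤ := {m | ¬ noPole K (qp K lam μ p (r0 + m * μ)) h} with hS
  have hSsub : S ⊆ {m | qp K lam μ p (r0 + m * μ) ∣ bh} := by
    intro m hm
    by_contra hdvd
    exact hm ⟨ah, bh, hdvd, hhab.symm⟩
  have hSdvd_fin : ({m : ℤ | qp K lam μ p (r0 + m * μ) ∣ bh}).Finite := by
    have hex : ∀ m ∈ {m : ℤ | qp K lam μ p (r0 + m * μ) ∣ bh},
        ∃ t, t ∈ (UniqueFactorizationMonoid.factors bh).toFinset ∧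
          Associated (qp K lam μ p (r0 + m * μ)) t := by
      intro m hm
      obtain ⟨t, ht, hat⟩ := UniqueFactorizationMonoid.exists_mem_factors_of_dvd hbh0
        (qp_irred K lam μ α β p hbez hp hpirr _) hm
      exact ⟨t, Multiset.mem_toFinset.mpr ht, hat⟩
    choose g hg1 hg2 using hex
    apply Set.Finite.of_finite_image (f := fun m =>
      if hm : m ∈ {m : ℤ | qp K lam μ p (r0 + m * μ) ∣ bh} then g m hm else 0)
    · apply Set.Finite.subset (Finset.finite_toSet
        ((UniqueFactorizationMonoid.factors bh).toFinset ∪ {0}))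
      rintro t ⟨m, hm, rfl⟩
      simp only [hm, dif_pos]
      exact Finset.mem_union_left _ (hg1 m hm)
    · intro m hm m' hm' hEq
      simp only [hm, hm', dif_pos] at hEq
      have hassoc : Associated (qp K lam μ p (r0 + m * μ)) (qp K lam μ p (r0 + m' * μ)) :=
        (hg2 m hm).trans (hEq ▸ (hg2 m' hm').symm)
      have heq2 := qp_assoc_inj K lam μ α β p hμ hbez hp hpirr hassoc
      have h3 : m * μ = m' * μ := by omega
      exact mul_right_cancel₀ (by omega : μ ≠ 0) h3
  -- moving poles with σ_y
  have hmove : ∀ (c : ℤ) (x : Fxy K), noPole K (qp K lam μ p c) x →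
      noPole K (qp K lam μ p (c + μ)) (σyF K x) := by
    intro c x hx
    have h2 := noPole_σ_zpow K (s := (1 : ℤ)) hx
    rw [zpow_one, zpow_one, σyR_qp] at h2
    exact h2
  have hmove' : ∀ (c : ℤ) (x : Fxy K), noPole K (qp K lam μ p c) (σyF K x) →
      noPole K (qp K lam μ p (c - μ)) x := by
    intro c x hx
    have h2 := noPole_σ_zpow K (s := (-1 : ℤ)) hx
    rw [σyR_zpow_qp] at h2
    have h3 : (σyF K ^ (-1 : ℤ)) (σyF K x) = x := by
      rw [zpow_neg_one]
      exact aut_cancel _ _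
    rw [h3, show c + (-1) * μ = c - μ by ring] at h2
    exact h2
  -- S is finite and nonempty
  have hSfin : S.Finite := hSdvd_fin.subset hSsub
  have hSne : S.Nonempty := by
    by_contra hcon
    rw [Set.not_nonempty_iff_eq_empty] at hcon
    have h0 : noPole K (qp K lam μ p r0) h := by
      have : (0 : ℤ) ∉ S := by rw [hcon]; exact Set.notMem_empty _
      rw [hS, Set.mem_setOf_eq, not_not] at this
      rwa [show r0 + 0 * μ = r0 by ring] at this
    have hm1 : noPole K (qp K lam μ p (r0 - μ)) h := by
      have : (-1 : ℤ) ∉ S := by rw [hcon]; exact Set.notMem_empty _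
      rw [hS, Set.mem_setOf_eq, not_not] at this
      rwa [show r0 + (-1) * μ = r0 - μ by ring] at this
    have hσ : noPole K (qp K lam μ p r0) (σyF K h) := by
      have := hmove _ _ hm1
      rwa [show r0 - μ + μ = r0 by ring] at this
    apply stepB
    rw [hh]
    exact noPole_sub K (qp_prime K lam μ α β p hbez hp hpirr r0) hσ h0
  set T : Finset ℤ := hSfin.toFinset with hT
  have hTne : T.Nonempty := hSfin.toFinset_nonempty.mpr hSne
  set M : ℤ := T.max' hTne with hM
  have hMmem : M ∈ S := hSfin.mem_toFinset.mp (T.max'_mem hTne)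
  have hMub : ∀ m ∈ S, m ≤ M := fun m hm =>
    T.le_max' m (hSfin.mem_toFinset.mpr hm)
  -- extract a pole of w outside [0,μ) unless the index collapses
  have hpoleW : ∀ m : ℤ, m ∉ S → (m - 1) ∈ S →
      ¬ noPole K (qp K lam μ p (r0 + m * μ)) w := by
    intro m hm hm1 hc
    have hA : noPole K (qp K lam μ p (r0 + m * μ)) h := by
      rw [hS, Set.mem_setOf_eq, not_not] at hm
      exact hm
    have hB : ¬ noPole K (qp K lam μ p (r0 + m * μ)) (σyF K h) := by
      intro hcc
      have h2 := hmove' _ _ hcc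
      rw [show r0 + m * μ - μ = r0 + (m - 1) * μ by ring] at h2
      exact hm1 h2
    apply hB
    have hσ : σyF K h = w + h := by rw [hh]; ring
    rw [hσ]
    exact noPole_add K (qp_prime K lam μ α β p hbez hp hpirr _) hc hA
  have hstepA' : ∀ m : ℤ, ¬ noPole K (qp K lam μ p (r0 + m * μ)) w →
      ∃ r ∈ Finset.range μ.toNat, r0 + m * μ = (r : ℤ) := by
    intro m hc
    by_contra hno
    push_neg at hno
    exact hc (stepA _ hno)
  -- the maximum must be -1
  have hMeq : M = -1 := by
    have hMS : (M + 1) ∉ S := fun hmem => by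
      have := hMub _ hmem
      omega
    have hW := hpoleW (M + 1) hMS (by rwa [show M + 1 - 1 = M by ring])
    obtain ⟨r, hrmem, hre⟩ := hstepA' _ hW
    rw [Finset.mem_range] at hrmem
    have hrb : (0 : ℤ) ≤ (r : ℤ) ∧ (r : ℤ) < μ := by omega
    rcases lt_trichotomy (M + 1) 0 with hlt | heq0 | hgt
    · exfalso
      have : (M + 1) * μ ≤ (-1) * μ :=
        mul_le_mul_of_nonneg_right (by omega) (by omega)
      omega
    · omega
    · exfalso
      have : (1 : ℤ) * μ ≤ (M + 1) * μ :=
        mul_le_mul_of_nonneg_right (by omega) (by omega)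
      omega
  -- the minimum gives the contradiction
  set m0 : ℤ := T.min' hTne with hm0
  have hm0mem : m0 ∈ S := hSfin.mem_toFinset.mp (T.min'_mem hTne)
  have hm0lb : ∀ m ∈ S, m0 ≤ m := fun m hm =>
    T.min'_le m (hSfin.mem_toFinset.mpr hm)
  have hm0le : m0 ≤ -1 := by
    have := hMub _ hm0mem
    omega
  have hm1S : (m0 - 1) ∉ S := fun hmem => by
    have := hm0lb _ hmem
    omega
  have hA' : noPole K (qp K lam μ p (r0 + (m0 - 1) * μ)) h := by
    rw [hS, Set.mem_setOf_eq, not_not] at hm1S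
    exact hm1S
  have hB' : noPole K (qp K lam μ p (r0 + m0 * μ)) (σyF K h) := by
    have := hmove _ _ hA'
    rwa [show r0 + (m0 - 1) * μ + μ = r0 + m0 * μ by ring] at this
  have hW' : ¬ noPole K (qp K lam μ p (r0 + m0 * μ)) w := by
    intro hc
    apply hm0mem
    have hheq : h = σyF K h - w := by rw [hh]; ring
    rw [hheq]
    exact noPole_sub K (qp_prime K lam μ α β p hbez hp hpirr _) hB' hc
  obtain ⟨r, hrmem, hre⟩ := hstepA' _ hW'
  rw [Finset.mem_range] at hrmem
  have : m0 * μ ≤ (-1) * μ :=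
    mul_le_mul_of_nonneg_right (by omega) (by omega)
  omega

end Key

end
section


variable (K : Type*) [Field K] [CharZero K]

lemma aut_zpow_fixed {B : Type*} [Semiring B] (s : RingAut B) (b : B) (h : s b = b) :
    ∀ n : ℤ, (s ^ n) b = b := by
  intro n
  have := zpow_family s (fun _ => b) 0 (fun c => h) n 0
  exact this

section Good

variable (lam μ α β : ℤ) (p : Polynomial K)

/-- "Proper fraction" shape: `a/u` with `u ∈ K[x]` and `deg_y a < deg p`. -/
def GoodP (h : Fxy K) : Prop :=
  ∃ (a : Rxy K) (u : Polynomial K), u ≠ 0 ∧ h = ι₀ K a / ιx₀ K u ∧ a.degree < p.degree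

lemma ιx₀_ne_zero {u : Polynomial K} (hu : u ≠ 0) : ιx₀ K u ≠ 0 := by
  rw [ιx₀_eq]
  exact ι₀_ne_zero K (fun h =>
    hu ((map_eq_zero_iff (C : Polynomial K →+* Rxy K) C_injective).mp h))

lemma good_zero (hp0 : p ≠ 0) : GoodP K p 0 := by
  refine ⟨0, 1, one_ne_zero, by simp, ?_⟩
  rw [degree_zero]
  exact bot_lt_iff_ne_bot.mpr (fun h => hp0 (degree_eq_bot.mp h))

lemma good_add {f g : Fxy K} (hf : GoodP K p f) (hg : GoodP K p g) : GoodP K p (f + g) := by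
  obtain ⟨a, u, hu, rfl, ha⟩ := hf
  obtain ⟨a', u', hu', rfl, ha'⟩ := hg
  refine ⟨a * C u' + a' * C u, u * u', mul_ne_zero hu hu', ?_, ?_⟩
  · have e1 : (C (u * u') : Rxy K) = C u * C u' := map_mul _ _ _
    rw [div_add_div _ _ (ιx₀_ne_zero K hu) (ιx₀_ne_zero K hu'), ιx₀_eq, ιx₀_eq, ιx₀_eq, e1,
      map_add, map_mul, map_mul, map_mul]
    ring
  · have hb1 : (a * C u').degree ≤ a.degree := by
      calc (a * C u').degree ≤ a.degree + (C u' : Rxy K).degree := degree_mul_le _ _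
        _ ≤ a.degree + 0 := add_le_add_right degree_C_le _
        _ = a.degree := add_zero _
    have hb2 : (a' * C u).degree ≤ a'.degree := by
      calc (a' * C u).degree ≤ a'.degree + (C u : Rxy K).degree := degree_mul_le _ _
        _ ≤ a'.degree + 0 := add_le_add_right degree_C_le _
        _ = a'.degree := add_zero _
    calc (a * C u' + a' * C u).degree ≤ max (a * C u').degree (a' * C u).degree :=
          degree_add_le _ _
      _ < p.degree := max_lt (lt_of_le_of_lt hb1 ha) (lt_of_le_of_lt hb2 ha')

lemma good_sum {γ : Type*} {s : Finset γ} {F : γ → Fxy K} (hp0 : p ≠ 0)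
    (h : ∀ j ∈ s, GoodP K p (F j)) : GoodP K p (∑ j ∈ s, F j) := by
  classical
  induction s using Finset.induction_on with
  | empty => simpa using good_zero K p hp0
  | insert a s' hnot ih =>
      rw [Finset.sum_insert hnot]
      exact good_add K p (h a (Finset.mem_insert_self a s'))
        (ih fun j hj => h j (Finset.mem_insert_of_mem hj))

lemma good_cmul {f : Fxy K} (c : Polynomial K) (hf : GoodP K p f) : GoodP K p (ιx₀ K c * f) := by
  obtain ⟨a, u, hu, rfl, ha⟩ := hf
  refine ⟨C c * a, u, hu, ?_, ?_⟩
  · rw [map_mul, mul_div_assoc]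
    congr 1
  · calc (C c * a : Rxy K).degree ≤ (C c : Rxy K).degree + a.degree := degree_mul_le _ _
      _ ≤ 0 + a.degree := add_le_add_left degree_C_le _
      _ = a.degree := zero_add _
      _ < p.degree := ha

lemma σxK_zpow_ne_zero {u : Polynomial K} (hu : u ≠ 0) (n : ℤ) : (σxK K ^ n) u ≠ 0 := by
  intro h
  have := (σxK K ^ n).injective (h.trans (map_zero _).symm)
  exact hu this

lemma σxR_zpow_C (n : ℤ) (u : Polynomial K) :
    (σxR K ^ n) (C u) = C ((σxK K ^ n) u) :=
  compat_zpow (C : Polynomial K →+* Rxy K) (σxK K) (σxR K) (σxR_C K) n u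

lemma deg_σxR (a : Rxy K) : (σxR K a).degree = a.degree := by
  show (mapEquiv (shiftPoly K).toRingEquiv a).degree = a.degree
  rw [mapEquiv_apply]
  exact degree_map_eq_of_injective (shiftPoly K).toRingEquiv.injective a

lemma deg_σxR_zpow (n : ℤ) (a : Rxy K) : ((σxR K ^ n) a).degree = a.degree := by
  have base : ∀ b : Rxy K, (σxR K b).degree = b.degree := deg_σxR K
  have hinv : ∀ b : Rxy K, ((σxR K)⁻¹ b).degree = b.degree := by
    intro b
    have h6 := base ((σxR K)⁻¹ b)
    rw [aut_cancel'] at h6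
    exact h6.symm
  have hnat : ∀ (m : ℕ) (b : Rxy K), ((σxR K ^ m) b).degree = b.degree := by
    intro m
    induction m with
    | zero => intro b; rfl
    | succ m ih => intro b; rw [pow_succ, aut_mul_apply, ih, base]
  have hinvnat : ∀ (m : ℕ) (b : Rxy K), (((σxR K) ^ m)⁻¹ b).degree = b.degree := by
    intro m b
    have h6 := hnat m (((σxR K) ^ m)⁻¹ b)
    rw [aut_cancel'] at h6
    exact h6.symm
  cases n with
  | ofNat m => rw [Int.ofNat_eq_coe, zpow_natCast, hnat]
  | negSucc m => rw [zpow_negSucc, hinvnat]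

lemma good_σx {f : Fxy K} (n : ℤ) (hf : GoodP K p f) : GoodP K p ((σxF K ^ n) f) := by
  obtain ⟨a, u, hu, rfl, ha⟩ := hf
  refine ⟨(σxR K ^ n) a, (σxK K ^ n) u, σxK_zpow_ne_zero K hu n, ?_, ?_⟩
  · rw [map_div₀]
    show (σxF K ^ n) (ι₀ K a) / (σxF K ^ n) (ιx₀ K u) = _
    rw [σxF_zpow_ι, ιx₀_eq, σxF_zpow_ι, σxR_zpow_C, ιx₀_eq]
  · rw [deg_σxR_zpow]; exact ha

lemma σyR_C_fixed (n : ℤ) (u : Polynomial K) : (σyR K ^ n) (C u) = C u :=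
  aut_zpow_fixed (σyR K) (C u) (σyR_C K u) n

lemma deg_σyR (a : Rxy K) : (σyR K a).degree = a.degree := by
  rcases eq_or_ne a 0 with rfl | ha
  · rw [map_zero]
  · have hσa : σyR K a ≠ 0 := fun h => ha ((σyR K).injective (h.trans (map_zero _).symm))
    have hcomp : σyR K a = a.comp (X + C 1) := by
      show (shiftPoly (Polynomial K)) a = _
      rw [shiftPoly]
      show (Polynomial.aeval (X + 1)) a = _
      rw [comp_eq_aeval, Polynomial.aeval_def, Polynomial.aeval_def, map_one]
    rw [hcomp, degree_eq_natDegree ha, degree_eq_natDegree (by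
      rw [← hcomp]; exact hσa)]
    congr 1
    rw [natDegree_comp]
    have : (X + C (1 : Polynomial K)).natDegree = 1 := natDegree_X_add_C _
    rw [this, mul_one]

lemma deg_σyR_zpow (n : ℤ) (a : Rxy K) : ((σyR K ^ n) a).degree = a.degree := by
  have base : ∀ b : Rxy K, (σyR K b).degree = b.degree := deg_σyR K
  have hnat : ∀ (m : ℕ) (b : Rxy K), ((σyR K ^ m) b).degree = b.degree := by
    intro m
    induction m with
    | zero => intro b; rfl
    | succ m ih => intro b; rw [pow_succ, aut_mul_apply, ih, base]
  have hinvnat : ∀ (m : ℕ) (b : Rxy K), (((σyR K) ^ m)⁻¹ b).degree = b.degree := by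
    intro m b
    have h6 := hnat m (((σyR K) ^ m)⁻¹ b)
    rw [aut_cancel'] at h6
    exact h6.symm
  cases n with
  | ofNat m => rw [Int.ofNat_eq_coe, zpow_natCast, hnat]
  | negSucc m => rw [zpow_negSucc, hinvnat]

lemma good_σy {f : Fxy K} (n : ℤ) (hf : GoodP K p f) : GoodP K p ((σyF K ^ n) f) := by
  obtain ⟨a, u, hu, rfl, ha⟩ := hf
  refine ⟨(σyR K ^ n) a, u, hu, ?_, ?_⟩
  · rw [map_div₀]
    show (σyF K ^ n) (ι₀ K a) / (σyF K ^ n) (ιx₀ K u) = _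
    rw [σyF_zpow_ι, ιx₀_eq, σyF_zpow_ι, σyR_C_fixed]
  · rw [deg_σyR_zpow]; exact ha

lemma good_ite {f : Fxy K} (c : Prop) [Decidable c] (hp0 : p ≠ 0) (hf : GoodP K p f) :
    GoodP K p (if c then f else 0) := by
  split_ifs
  · exact hf
  · exact good_zero K p hp0

/-- The coefficients of `L ⊙ M` are proper whenever those of `M` are. -/
lemma good_odot (hbez : α * lam + β * μ = 1) (hp0 : p ≠ 0) (L : ℕ →₀ Polynomial K) (M : OpB K)
    (hM : ∀ i : ℤ, GoodP K p (M i)) (j : ℤ) :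
    GoodP K p (odot K α β lam μ (ιxOp K L) M j) := by
  classical
  rw [odot_ιxOp K α β lam μ hbez]
  rw [Finsupp.sum_apply]
  rw [Finsupp.sum]
  apply good_sum K p hp0
  intro ℓ _
  rw [Finsupp.sum_apply, Finsupp.sum]
  apply good_sum K p hp0
  intro i _
  rw [Finsupp.single_apply]
  apply good_ite K p _ hp0
  exact good_cmul K p _ (good_σx K p _ (hM i))

end Good

end
section


variable (K : Type*) [Field K] [CharZero K]

section CF

variable (lam μ α β : ℤ) (p : Polynomial K) (k : ℕ)

/-- The fiber sums `c_r = Σ_{j ≡ r (μ)} σ_y^{-(j-r)/μ}(P_j)`. -/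
def cFun (μ : ℤ) (P : OpB K) (r : ℤ) : Fxy K :=
  ∑ j ∈ P.support, if μ ∣ (j - r) then (σyF K ^ (-((j - r) / μ))) (P j) else 0

lemma good_cFun (hp0 : p ≠ 0) (P : OpB K) (hP : ∀ j, GoodP K p (P j)) (r : ℤ) :
    GoodP K p (cFun K μ P r) := by
  classical
  apply good_sum K p hp0
  intro j _
  apply good_ite K p _ hp0
  exact good_σy K p _ (hP j)

lemma cFun_shift (hμ0 : μ ≠ 0) (P : OpB K) (r : ℤ) :
    cFun K μ P (r + μ) = σyF K (cFun K μ P r) := by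
  classical
  rw [cFun, cFun, map_sum]
  apply Finset.sum_congr rfl
  intro j _
  have hiff : μ ∣ j - (r + μ) ↔ μ ∣ j - r := by
    constructor
    · intro ⟨t, ht⟩; exact ⟨t + 1, by rw [mul_add, mul_one]; omega⟩
    · intro ⟨t, ht⟩; exact ⟨t - 1, by rw [mul_sub, mul_one]; omega⟩
  by_cases hd : μ ∣ j - r
  · rw [if_pos (hiff.mpr hd), if_pos hd]
    obtain ⟨t, ht⟩ := hd
    have e1 : (j - (r + μ)) / μ = t - 1 := by
      rw [show j - (r + μ) = μ * (t - 1) by rw [mul_sub, mul_one]; omega]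
      exact Int.mul_ediv_cancel_left _ hμ0
    have e2 : (j - r) / μ = t := by
      rw [ht]; exact Int.mul_ediv_cancel_left _ hμ0
    rw [e1, e2]
    have e3 : (-(t - 1) : ℤ) = 1 + (-t) := by ring
    rw [e3, zpow_add, zpow_one, aut_mul_apply]
  · rw [if_neg (fun hc => hd (hiff.mp hc)), if_neg hd, map_zero]

lemma cFun_all_zero (hμ : 0 < μ) (P : OpB K)
    (h0 : ∀ r : ℤ, 0 ≤ r → r < μ → cFun K μ P r = 0) (r : ℤ) : cFun K μ P r = 0 := by
  have hz := zpow_family (σyF K) (cFun K μ P) μ (fun c => (cFun_shift K μ (by omega) P c).symm)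
  have h1 := Int.emod_add_mul_ediv r μ
  calc cFun K μ P r = cFun K μ P (r % μ + (r / μ) * μ) := by
        rw [show r % μ + (r / μ) * μ = r by rw [mul_comm]; exact h1]
    _ = (σyF K ^ (r / μ)) (cFun K μ P (r % μ)) := (hz (r / μ) (r % μ)).symm
    _ = 0 := by
        rw [h0 (r % μ) (Int.emod_nonneg r (by omega)) (Int.emod_lt_of_pos r hμ), map_zero]

/-- `applyB` of an operator at `1/p(z)^k` expands into shifted kernels. -/
lemma applyB_Gq (hbez : α * lam + β * μ = 1) (N : OpB K) :
    applyB K α β N (Gq K lam μ p k 0)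
      = ∑ j ∈ N.support, N j * Gq K lam μ p k j := by
  rw [applyB, Finsupp.sum]
  apply Finset.sum_congr rfl
  intro j _
  congr 1
  have hfs : FixShift K lam μ (τF K α β ^ j) (j * (α * lam + β * μ)) :=
    (fixShift_σv K lam μ (α, β)).zpow K lam μ j
  have := hfs.Gq_eval K lam μ p k 0
  rw [hbez, mul_one, zero_add] at this
  exact this

/-- Auxiliary arithmetic facts. -/
lemma mod_toNat_iff (hμ : 0 < μ) (j : ℤ) {r : ℕ} (hr : r < μ.toNat) :
    ((j % μ).toNat = r ↔ μ ∣ j - (r : ℤ)) := by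
  have hnn := Int.emod_nonneg j (by omega : μ ≠ 0)
  have hlt := Int.emod_lt_of_pos j hμ
  have hed := Int.emod_add_mul_ediv j μ
  constructor
  · intro h
    exact ⟨j / μ, by omega⟩
  · rintro ⟨t, ht⟩
    have h2 : ((r : ℤ) + μ * t) % μ = (r : ℤ) % μ := Int.add_mul_emod_self_left (r : ℤ) μ t
    have h3 : (r : ℤ) % μ = (r : ℤ) := Int.emod_eq_of_lt (by omega) (by omega)
    have h4 : j % μ = (r : ℤ) := by
      have hj : j = (r : ℤ) + μ * t := by omega
      rw [hj, h2, h3]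
    omega

/-- **Reduction lemma**: if `Σ_j P_j/p(z+j)^k` is summable, so is the fiber-collapsed sum. -/
lemma reduction (hμ : 0 < μ) (P : OpB K)
    (hsumm : IsSummableY K (∑ j ∈ P.support, P j * Gq K lam μ p k j)) :
    IsSummableY K (∑ r ∈ Finset.range μ.toNat,
      cFun K μ P (r : ℤ) * Gq K lam μ p k (r : ℤ)) := by
  classical
  set wfun : ℤ → Fxy K :=
    fun j => (σyF K ^ (-(j / μ))) (P j) * Gq K lam μ p k (j % μ) with hwfun
  have hterm : ∀ j : ℤ, IsSummableY K (P j * Gq K lam μ p k j - wfun j) := by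
    intro j
    have hσ : (σyF K ^ (j / μ)) (wfun j) = P j * Gq K lam μ p k j := by
      rw [hwfun]
      show (σyF K ^ (j / μ)) ((σyF K ^ (-(j / μ))) (P j) * Gq K lam μ p k (j % μ)) = _
      rw [map_mul]
      congr 1
      · have hc : (σyF K ^ (j / μ)) ((σyF K ^ (-(j / μ))) (P j))
            = ((σyF K ^ (j / μ)) * (σyF K ^ (-(j / μ)))) (P j) := rfl
        rw [hc, ← zpow_add]
        rw [show j / μ + -(j / μ) = 0 by ring]
        rfl
      · have hfs : FixShift K lam μ (σyF K ^ (j / μ)) ((j / μ) * μ) :=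
          (fixShift_σyF K lam μ).zpow K lam μ (j / μ)
        have := hfs.Gq_eval K lam μ p k (j % μ)
        rw [this]
        congr 1
        have h7 := Int.emod_add_mul_ediv j μ
        rw [mul_comm] at h7
        exact h7
    have := summ_shift K (j / μ) (wfun j)
    rwa [hσ] at this
  have hdiff : IsSummableY K
      (∑ j ∈ P.support, P j * Gq K lam μ p k j - ∑ j ∈ P.support, wfun j) := by
    rw [← Finset.sum_sub_distrib]
    exact summ_sum K (fun j _ => hterm j)
  have hW : IsSummableY K (∑ j ∈ P.support, wfun j) := by
    have := summ_sub K hsumm hdiff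
    have he : (∑ j ∈ P.support, P j * Gq K lam μ p k j)
        - ((∑ j ∈ P.support, P j * Gq K lam μ p k j) - ∑ j ∈ P.support, wfun j)
        = ∑ j ∈ P.support, wfun j := by ring
    rwa [he] at this
  -- regroup by residue class
  have hfiber : ∑ r ∈ Finset.range μ.toNat,
      ∑ j ∈ P.support.filter (fun j => (j % μ).toNat = r), wfun j
      = ∑ j ∈ P.support, wfun j := by
    apply Finset.sum_fiberwise_of_maps_to
    intro j _
    rw [Finset.mem_range]
    have hnn := Int.emod_nonneg j (by omega : μ ≠ 0)
    have hlt := Int.emod_lt_of_pos j hμ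
    omega
  have hinner : ∀ r ∈ Finset.range μ.toNat,
      ∑ j ∈ P.support.filter (fun j => (j % μ).toNat = r), wfun j
        = cFun K μ P (r : ℤ) * Gq K lam μ p k (r : ℤ) := by
    intro r hr
    rw [Finset.mem_range] at hr
    rw [Finset.sum_filter, cFun, Finset.sum_mul]
    apply Finset.sum_congr rfl
    intro j _
    by_cases hcond : μ ∣ j - (r : ℤ)
    · rw [if_pos ((mod_toNat_iff μ hμ j hr).mpr hcond), if_pos hcond]
      have hjr : j % μ = (r : ℤ) := by
        have h8 := (mod_toNat_iff μ hμ j hr).mpr hcond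
        have hnn := Int.emod_nonneg j (by omega : μ ≠ 0)
        omega
      have hdiv : (j - (r : ℤ)) / μ = j / μ := by
        have hed := Int.emod_add_mul_ediv j μ
        rw [show j - (r : ℤ) = μ * (j / μ) by omega]
        exact Int.mul_ediv_cancel_left _ (by omega)
      show (σyF K ^ (-(j / μ))) (P j) * Gq K lam μ p k (j % μ) = _
      rw [hjr, hdiv]
    · rw [if_neg (fun hc => hcond ((mod_toNat_iff μ hμ j hr).mp hc)), if_neg hcond, zero_mul]
  rw [← Finset.sum_congr rfl hinner]
  rwa [hfiber]

end CF

end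
section


variable (K : Type*) [Field K] [CharZero K]

lemma lord_le {P : OpB K} {j : ℤ} (hj : j ∈ P.support) : lord K P ≤ j := by
  obtain ⟨b, hb⟩ := Finset.min_of_mem hj
  have h1 := Finset.min_le hj
  rw [hb] at h1
  rw [lord, hb]
  exact_mod_cast h1

lemma le_hord {P : OpB K} {j : ℤ} (hj : j ∈ P.support) : j ≤ hord K P := by
  obtain ⟨b, hb⟩ := Finset.max_of_mem hj
  have h1 := Finset.le_max hj
  rw [hb] at h1
  rw [hord, hb]
  exact_mod_cast h1

section QConstr

variable (μ : ℤ)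

lemma t_eq_zero (hμ : 0 < μ) {t : ℤ} (h0 : 0 ≤ μ * t) (h1 : μ * t < μ) : t = 0 := by
  rcases lt_trichotomy t 0 with hlt | heq | hgt
  · exfalso
    have : μ * t ≤ μ * (-1) := mul_le_mul_of_nonneg_left (by omega) (by omega)
    omega
  · exact heq
  · exfalso
    have : μ * 1 ≤ μ * t := mul_le_mul_of_nonneg_left (by omega) (by omega)
    omega

lemma neg_div_eq (hμ0 : μ ≠ 0) {a : ℤ} (h : μ ∣ a) : (-a) / μ = -(a / μ) := by
  obtain ⟨t, rfl⟩ := h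
  rw [Int.mul_ediv_cancel_left _ hμ0, ← mul_neg, Int.mul_ediv_cancel_left _ hμ0]

lemma exists_Q (hμ : 0 < μ) (P : OpB K) (hvan : ∀ r : ℤ, cFun K μ P r = 0) :
    ∃ Q : OpB K, P = TQ K μ Q - Q := by
  classical
  have hμ0 : μ ≠ 0 := by omega
  set Qf : ℤ → Fxy K := fun m => -∑ j ∈ P.support,
      (if μ ∣ (m - j) ∧ j ≤ m then (σyF K ^ ((m - j) / μ)) (P j) else 0) with hQf
  have hQf0 : ∀ m : ℤ, (∀ j ∈ P.support, j ≤ m) → Qf m = 0 := by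
    intro m hm
    have he : Qf m = -cFun K μ P m := by
      rw [hQf, cFun]
      show -∑ j ∈ P.support, _ = -∑ j ∈ P.support, _
      congr 1
      apply Finset.sum_congr rfl
      intro j hj
      by_cases h1 : μ ∣ m - j
      · rw [if_pos ⟨h1, hm j hj⟩, if_pos (by
          obtain ⟨t, ht⟩ := h1
          exact ⟨-t, by rw [mul_neg]; omega⟩)]
        have h2 : j - m = -(m - j) := by ring
        rw [h2, neg_div_eq μ hμ0 h1, neg_neg]
      · rw [if_neg (fun hc => h1 hc.1), if_neg (by
          intro hc
          obtain ⟨t, ht⟩ := hc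
          exact h1 ⟨-t, by rw [mul_neg]; omega⟩)]
    rw [he, hvan m, neg_zero]
  have hsupp : ∀ m : ℤ, Qf m ≠ 0 → m ∈ Finset.Icc (lord K P) (hord K P) := by
    intro m hne
    rw [Finset.mem_Icc]
    constructor
    · by_contra hlt
      push_neg at hlt
      apply hne
      rw [hQf]
      show -∑ j ∈ P.support, _ = 0
      rw [Finset.sum_eq_zero, neg_zero]
      intro j hj
      rw [if_neg]
      rintro ⟨-, hjm⟩
      have := lord_le K hj
      omega
    · by_contra hgt
      push_neg at hgt
      exact hne (hQf0 m (fun j hj => by have := le_hord K hj; omega))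
  refine ⟨Finsupp.onFinset (Finset.Icc (lord K P) (hord K P)) Qf hsupp, ?_⟩
  set Q : OpB K := Finsupp.onFinset (Finset.Icc (lord K P) (hord K P)) Qf hsupp with hQ
  have hQapp : ∀ a : ℤ, Q a = Qf a := fun a => rfl
  ext m
  rw [Finsupp.sub_apply, TQ_apply, hQapp, hQapp]
  -- push σ through Qf (m - μ)
  have hσQf : σyF K (Qf (m - μ)) = -∑ j ∈ P.support,
      (if μ ∣ (m - j) ∧ j ≤ m - μ then (σyF K ^ ((m - j) / μ)) (P j) else 0) := by
    rw [hQf]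
    show σyF K (-∑ j ∈ P.support, _) = _
    rw [map_neg, map_sum]
    congr 1
    apply Finset.sum_congr rfl
    intro j hj
    rw [apply_ite (σyF K), map_zero]
    by_cases h1 : μ ∣ m - μ - j
    · have h1' : μ ∣ m - j := by
        obtain ⟨t, ht⟩ := h1
        exact ⟨t + 1, by rw [mul_add, mul_one]; omega⟩
      by_cases h2 : j ≤ m - μ
      · rw [if_pos ⟨h1, by omega⟩, if_pos ⟨h1', h2⟩]
        obtain ⟨t, ht⟩ := h1
        have e1 : (m - μ - j) / μ = t := by rw [ht, Int.mul_ediv_cancel_left _ hμ0]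
        have e2 : (m - j) / μ = 1 + t := by
          rw [show m - j = μ * (1 + t) by rw [mul_add, mul_one]; omega,
            Int.mul_ediv_cancel_left _ hμ0]
        rw [e1, e2, zpow_add, zpow_one]
        rfl
      · rw [if_neg (fun hc => h2 hc.2), if_neg (fun hc => h2 hc.2)]
    · have h1' : ¬ μ ∣ m - j := by
        intro hc
        obtain ⟨t, ht⟩ := hc
        exact h1 ⟨t - 1, by rw [mul_sub, mul_one]; omega⟩
      rw [if_neg (fun hc => h1 hc.1), if_neg (fun hc => h1' hc.1)]
  rw [hσQf, hQf]
  show P m = -∑ j ∈ P.support, _ - -∑ j ∈ P.support, _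
  rw [show ∀ X Y : Fxy K, -X - -Y = Y - X from fun X Y => by ring]
  rw [← Finset.sum_sub_distrib]
  have hper : ∀ j ∈ P.support,
      ((if μ ∣ (m - j) ∧ j ≤ m then (σyF K ^ ((m - j) / μ)) (P j) else 0)
        - (if μ ∣ (m - j) ∧ j ≤ m - μ then (σyF K ^ ((m - j) / μ)) (P j) else 0))
      = if j = m then P j else 0 := by
    intro j hj
    by_cases h1 : μ ∣ m - j
    · by_cases h2 : j ≤ m - μ
      · rw [if_pos ⟨h1, by omega⟩, if_pos ⟨h1, h2⟩, sub_self, if_neg (by omega)]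
      · by_cases h3 : j ≤ m
        · rw [if_pos ⟨h1, h3⟩, if_neg (fun hc => h2 hc.2), sub_zero]
          have hjm : j = m := by
            obtain ⟨t, ht⟩ := h1
            have ht0 : t = 0 := t_eq_zero μ hμ (by omega) (by omega)
            rw [ht0, mul_zero] at ht
            omega
          rw [if_pos hjm, hjm, sub_self, show ((0 : ℤ) / μ) = 0 from Int.zero_ediv μ]
          rfl
        · rw [if_neg (fun hc => h3 hc.2), if_neg (fun hc => h2 hc.2), sub_zero,
            if_neg (by omega)]
    · rw [if_neg (fun hc => h1 hc.1), if_neg (fun hc => h1 hc.1), sub_zero, if_neg (by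
        intro hc
        exact h1 (by rw [hc, sub_self]; exact dvd_zero μ))]
  rw [Finset.sum_congr rfl hper, Finset.sum_ite_eq' P.support m (fun j => P j)]
  by_cases hm : m ∈ P.support
  · rw [if_pos hm]
  · rw [if_neg hm, Finsupp.notMem_support_iff.mp hm]

end QConstr

end
section


variable (K : Type*) [Field K] [CharZero K]

section Assemble

variable (lam μ α β : ℤ) (p : Polynomial K) (k : ℕ)

lemma hgG (hbez : α * lam + β * μ = 1) :
    ∀ v : ℤ × ℤ, σv K v (Gq K lam μ p k 0)
      = (τF K α β ^ (v.1 * lam + v.2 * μ)) (Gq K lam μ p k 0) := by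
  intro v
  have h1 := (fixShift_σv K lam μ v).Gq_eval K lam μ p k 0
  have h2 : FixShift K lam μ (τF K α β ^ (v.1 * lam + v.2 * μ))
      ((v.1 * lam + v.2 * μ) * (α * lam + β * μ)) :=
    (fixShift_σv K lam μ (α, β)).zpow K lam μ (v.1 * lam + v.2 * μ)
  have h3 := h2.Gq_eval K lam μ p k 0
  rw [hbez, mul_one] at h3
  rw [h1, h3]

lemma chainB (hbez : α * lam + β * μ = 1) (L' : OpA K) (N : OpB K) :
    applyB K α β (odot K α β lam μ L' N) (Gq K lam μ p k 0)
      = applyA K L' (applyB K α β N (Gq K lam μ p k 0)) := by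
  rw [← applyA_ιB K α β N, ← applyA_mulA]
  show applyB K α β (φB K lam μ (mulA K L' (ιB K α β N))) _ = _
  exact applyB_φB K α β lam μ _ _ (hgG K lam μ α β p k hbez)

lemma cert (hbez : α * lam + β * μ = 1) (L' : OpA K) (N Q : OpB K)
    (hodot : odot K α β lam μ L' N = odot K α β lam μ (SyOne K) Q) :
    applyA K L' (applyB K α β N (Gq K lam μ p k 0))
      = σyF K (applyB K α β Q (Gq K lam μ p k 0))
        - applyB K α β Q (Gq K lam μ p k 0) := by
  rw [← chainB K lam μ α β p k hbez L' N, hodot, chainB K lam μ α β p k hbez (SyOne K) Q,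
    applyA_SyOne]

end Assemble

end

end S8
end

/-- Proposition `PROP:basiccriterion`.
Let `f = M(1/p(λx + μy)^k)`, where `(λ,μ)` is a pair of coprime integers with `μ > 0`,
`k > 0`, `p ∈ K[z]` is monic and irreducible, and `M = Σ_i a_i S_{λ,μ}^i` with
`a_i ∈ K(x)[y]`, finitely many nonzero, and `deg_y(a_i) < deg_z(p)`.  Let
`L ∈ K[x][S_x]` be a nonzero operator.  Then `L` is a telescoper for `f` if and only if
there exists `Q ∈ A_{λ,μ}` such that `L ⊙ M = (S_y − 1) ⊙ Q`; and when this is the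
case, `Q(1/p(λx + μy)^k)` is a certificate corresponding to `L`. -/
theorem statement8 (K : Type*) [Field K] [CharZero K]
    (lam μ α β : ℤ) (hμ : 0 < μ) (hcop : IsCoprime lam μ)
    (hbez : α * lam + β * μ = 1) (hα : 0 ≤ α ∧ α < μ)
    (hβ : lam ≠ 0 → |β| ≤ |lam|) (hβ0 : lam = 0 → α = 0 ∧ β = 1)
    (k : ℕ) (hk : 0 < k)
    (p : Polynomial K) (hp : p.Monic) (hpirr : Irreducible p)
    (M : OpB K)
    (hM : ∀ i : ℤ, ∃ (a : Rxy K) (u : Polynomial K), u ≠ 0 ∧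
        M i = ι₀ K a / ιx₀ K u ∧ a.degree < p.degree)
    (f : Fxy K)
    (hf : f = applyB K α β M
        ((Polynomial.eval₂ (ιK K) ((lam : Fxy K) * xF K + (μ : Fxy K) * yF K) p ^ k)⁻¹))
    (L : ℕ →₀ Polynomial K) (hL : L ≠ 0) :
    (IsTelescoper K L f ↔
        ∃ Q : OpB K,
          odot K α β lam μ (ιxOp K L) M = odot K α β lam μ (SyOne K) Q) ∧
      (∀ Q : OpB K,
        odot K α β lam μ (ιxOp K L) M = odot K α β lam μ (SyOne K) Q →
          applyA K (ιxOp K L) f =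
            σyF K (applyB K α β Q
              ((Polynomial.eval₂ (ιK K) ((lam : Fxy K) * xF K + (μ : Fxy K) * yF K) p ^ k)⁻¹)) -
            applyB K α β Q
              ((Polynomial.eval₂ (ιK K) ((lam : Fxy K) * xF K + (μ : Fxy K) * yF K) p ^ k)⁻¹)) := by
  have hg0 : (Polynomial.eval₂ (ιK K) ((lam : Fxy K) * xF K + (μ : Fxy K) * yF K) p ^ k)⁻¹
      = S8.Gq K lam μ p k 0 := by
    have harg : S8.zF K lam μ + ((0 : ℤ) : Fxy K)
        = (lam : Fxy K) * xF K + (μ : Fxy K) * yF K := by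
      rw [S8.zF]; simp
    rw [S8.Gq, harg]
  rw [hg0] at hf ⊢
  have hp0 : p ≠ 0 := hp.ne_zero
  constructor
  · constructor
    · rintro ⟨-, hsumm⟩
      -- forward direction
      have hLf : applyA K (ιxOp K L) f
          = applyB K α β (odot K α β lam μ (ιxOp K L) M) (S8.Gq K lam μ p k 0) := by
        rw [hf, S8.chainB K lam μ α β p k hbez]
      rw [hLf, S8.applyB_Gq K lam μ α β p k hbez] at hsumm
      have hGood : ∀ j : ℤ, S8.GoodP K p (odot K α β lam μ (ιxOp K L) M j) :=
        S8.good_odot K lam μ α β p hbez hp0 L M (fun i => hM i)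
      have hred := S8.reduction K lam μ p k hμ _ hsumm
      have hvr : ∀ r : ℤ, 0 ≤ r → r < μ →
          S8.cFun K μ (odot K α β lam μ (ιxOp K L) M) r = 0 := by
        intro r h0 h1
        exact S8.keyVanish K lam μ α β p k hμ hbez hp hpirr hk _
          (fun r' => S8.good_cFun K μ p hp0 _ hGood r') hred h0 h1
      have hvan := S8.cFun_all_zero K μ hμ _ hvr
      obtain ⟨Q, hPQ⟩ := S8.exists_Q K μ hμ _ hvan
      refine ⟨Q, ?_⟩
      rw [S8.odot_SyOne K α β lam μ hbez]
      exact hPQ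
    · rintro ⟨Q, hQ⟩
      refine ⟨hL, ?_⟩
      rw [hf]
      exact ⟨applyB K α β Q (S8.Gq K lam μ p k 0),
        S8.cert K lam μ α β p k hbez (ιxOp K L) M Q hQ⟩
  · intro Q hQ
    rw [hf]
    exact S8.cert K lam μ α β p k hbez (ιxOp K L) M Q hQ
end
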